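/- arXiv:1306.3469 — 4 statements merged into one kernel-verified Lean document; each statement's English description precedes it below -/
import Mathlib

section
/- Every permutation σ of {1,...,n} with nonempty support can be written as a product of two cycles of lengths m(σ) and n(σ), where the cycle of length n(σ) is interpreted as the identity if n(σ) = 1. -/
open Finset Equiv

/-- `IsCycleOfLen c l` : `c` is a cycle of length `l ≥ 2`, where a "cycle of
length 1" is interpreted as the identity permutation. -/
def IsCycleOfLen {n : ℕ} (c : Equiv.Perm (Fin n)) (l : ℕ) : Prop :=
  (l = 1 ∧ c = 1) ∨ (2 ≤ l ∧ c.IsCycle ∧ c.support.card = l)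

/-- `m(σ)`: the cardinality of the support of `σ`. -/
def mOf {n : ℕ} (σ : Equiv.Perm (Fin n)) : ℕ := σ.support.card

/-- `n(σ)`: the number of nontrivial cycles in the cycle decomposition of `σ`. -/
def nOf {n : ℕ} (σ : Equiv.Perm (Fin n)) : ℕ := σ.cycleType.card

namespace TwoCyclesAux

variable {α : Type*} [DecidableEq α]

lemma swap_shift {a b c : α} (hab : a ≠ b) (hac : a ≠ c) :
    Equiv.swap a c * Equiv.swap c b = Equiv.swap c b * Equiv.swap a b := by
  have h := Equiv.mul_swap_eq_swap_mul (Equiv.swap c b) a b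
  rw [Equiv.swap_apply_of_ne_of_ne hac hab, Equiv.swap_apply_right] at h
  exact h.symm

lemma formPerm_cons (a : α) :
    ∀ (l : List α) (h : l ≠ []), (a :: l).Nodup →
      List.formPerm (a :: l) = List.formPerm l * Equiv.swap a (l.getLast h) := by
  intro l
  induction l using List.reverseRecOn with
  | nil => intro h; exact absurd rfl h
  | append_singleton L b IH =>
    intro h hn
    rcases List.eq_nil_or_concat' L with rfl | ⟨L', c, rfl⟩
    · simp [List.formPerm_pair]
    · have hac : a ≠ c := by
        intro hh; apply (List.nodup_cons.mp hn).1; subst hh; simp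
      have hab : a ≠ b := by
        intro hh; apply (List.nodup_cons.mp hn).1; subst hh; simp
      have e1 : a :: ((L' ++ [c]) ++ [b]) = (a :: L') ++ [c, b] := by simp
      have e2 : (a :: L') ++ [c] = a :: (L' ++ [c]) := by simp
      have hL'c : L' ++ [c] ≠ [] := by simp
      have hglb : ((L' ++ [c]) ++ [b]).getLast h = b := by
        rw [List.getLast_append_right (by simp : [b] ≠ [])]; rfl
      have hglc : (L' ++ [c]).getLast hL'c = c := by
        rw [List.getLast_append_right (by simp : [c] ≠ [])]; rfl
      have hn' : (a :: (L' ++ [c])).Nodup :=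
        ((List.sublist_append_left (L' ++ [c]) [b]).cons₂ a).nodup hn
      rw [hglb, e1, List.formPerm_append_pair, e2,
        IH hL'c hn', hglc]
      have e3 : (L' ++ [c]) ++ [b] = L' ++ [c, b] := by simp
      rw [e3, show (L' ++ [c, b] : List α) = (L' ++ [c]) ++ [b] by simp,
        show ((L' ++ [c]) ++ [b] : List α) = (L' ++ [c]) ++ [b] from rfl]
      rw [show ((L' ++ [c]) ++ [b] : List α).formPerm =
          (L' ++ [c]).formPerm * Equiv.swap c b by
        have := List.formPerm_append_pair L' c b
        simpa using this]
      rw [mul_assoc, mul_assoc, swap_shift hab hac]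

lemma formPerm_append :
    ∀ (l₁ l₂ : List α) (h₁ : l₁ ≠ []) (h₂ : l₂ ≠ []), (l₁ ++ l₂).Nodup →
      List.formPerm (l₁ ++ l₂) = List.formPerm l₁ * List.formPerm l₂ *
        Equiv.swap (l₁.getLast h₁) (l₂.getLast h₂)
  | [], _, h₁, _, _ => absurd rfl h₁
  | [a], l₂, _, h₂, hn => by
    simpa using formPerm_cons a l₂ h₂ (by simpa using hn)
  | a :: b :: L, l₂, _, h₂, hn => by
    have IH := formPerm_append (b :: L) l₂ (by simp) h₂ (List.Nodup.of_cons hn)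
    have e1 : (a :: b :: L) ++ l₂ = a :: b :: (L ++ l₂) := by simp
    rw [e1, List.formPerm_cons_cons, show (b :: (L ++ l₂) : List α) = (b :: L) ++ l₂ from rfl,
      IH, List.formPerm_cons_cons]
    have : (a :: b :: L).getLast (by simp) = (b :: L).getLast (by simp) :=
      List.getLast_cons (by simp)
    rw [this]
    group

end TwoCyclesAux

theorem exists_two_cycles_eq {n : ℕ} (σ : Equiv.Perm (Fin n)) (hσ : σ ≠ 1) :
    ∃ C₁ C₂ : Equiv.Perm (Fin n),
      σ = C₁ * C₂ ∧ IsCycleOfLen C₁ (mOf σ) ∧ IsCycleOfLen C₂ (nOf σ) := by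
  classical
  -- key claim by induction on the number of cycle factors
  have key : ∀ (k : ℕ) (σ : Equiv.Perm (Fin n)), σ ≠ 1 →
      σ.cycleFactorsFinset.card = k →
      ∃ (l t : List (Fin n)) (hl : l ≠ []) (ht : t ≠ []),
        l.Nodup ∧ t.Nodup ∧ σ = l.formPerm * t.formPerm ∧
        l.toFinset = σ.support ∧ t.length = σ.cycleFactorsFinset.card ∧
        (∀ x ∈ t, x ∈ l) ∧ t.head ht = l.getLast hl := by
    intro k
    induction k with
    | zero =>
      intro σ hσ hk
      exact absurd (Equiv.Perm.cycleFactorsFinset_eq_empty_iff.mp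
        (Finset.card_eq_zero.mp hk)) hσ
    | succ k IH =>
      intro σ hσ hk
      rcases Nat.eq_zero_or_pos k with rfl | hkpos
      · -- σ is a single cycle
        obtain ⟨c, hc⟩ := Finset.card_eq_one.mp hk
        have hcyc : σ.IsCycle := by
          rw [Equiv.Perm.cycleFactorsFinset_eq_singleton_iff] at hc
          exact hc.1
        obtain ⟨x, hx⟩ := id hcyc
        have hxs : x ∈ σ.support := Equiv.Perm.mem_support.mpr hx.1
        set l := σ.toList x with hldef
        have hlnn : l ≠ [] := by
          simp [hldef, Equiv.Perm.toList_eq_nil_iff, hxs]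
        have hnl : l.Nodup := Equiv.Perm.nodup_toList σ x
        have hform : l.formPerm = σ := by
          rw [hldef, Equiv.Perm.formPerm_toList, Equiv.Perm.IsCycle.cycleOf_eq hcyc hx.1]
        have hsup : l.toFinset = σ.support := by
          rw [← hform]
          exact (List.support_formPerm_of_nodup l hnl
            (fun y => Equiv.Perm.toList_ne_singleton σ x y)).symm
        refine ⟨l, [l.getLast hlnn], hlnn, by simp, hnl, by simp, ?_, hsup, ?_, ?_, rfl⟩
        · simp [hform]
        · simp [hk]
        · intro y hy
          simp only [List.mem_singleton] at hy
          subst hy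
          exact List.getLast_mem hlnn
      · -- peel off one cycle
        have hne : σ.cycleFactorsFinset.Nonempty := by
          rw [← Finset.card_pos, hk]; omega
        obtain ⟨c, hc⟩ := hne
        set τ := σ * c⁻¹ with hτdef
        have hdisj : Equiv.Perm.Disjoint τ c :=
          Equiv.Perm.disjoint_mul_inv_of_mem_cycleFactorsFinset hc
        have hfactτ : τ.cycleFactorsFinset = σ.cycleFactorsFinset \ {c} :=
          Equiv.Perm.cycleFactorsFinset_mul_inv_mem_eq_sdiff hc
        have hcardτ : τ.cycleFactorsFinset.card = k := by
          rw [hfactτ, Finset.card_sdiff_of_subset (by simpa using hc), hk]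
          simp
        have hτne : τ ≠ 1 := by
          intro h
          rw [h, Equiv.Perm.cycleFactorsFinset_one] at hcardτ
          simp at hcardτ
          omega
        obtain ⟨l, t, hl, ht, hnl, hnt, hτeq, hsupτ, hlen, hsub, hht⟩ :=
          IH τ hτne hcardτ
        obtain ⟨h0, t0, rfl⟩ : ∃ h0 t0, t = h0 :: t0 :=
          ⟨t.head ht, t.tail, (List.cons_head_tail ht).symm⟩
        -- the cycle c as a list
        have hccyc : c.IsCycle := (Equiv.Perm.mem_cycleFactorsFinset_iff.mp hc).1
        obtain ⟨y, hy⟩ := id hccyc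
        set m := c.toList y with hmdef
        have hys : y ∈ c.support := Equiv.Perm.mem_support.mpr hy.1
        have hmnn : m ≠ [] := by
          simp [hmdef, Equiv.Perm.toList_eq_nil_iff, hys]
        have hnm : m.Nodup := Equiv.Perm.nodup_toList c y
        have hformm : m.formPerm = c := by
          rw [hmdef, Equiv.Perm.formPerm_toList, Equiv.Perm.IsCycle.cycleOf_eq hccyc hy.1]
        have hsupm : m.toFinset = c.support := by
          rw [← hformm]
          exact (List.support_formPerm_of_nodup m hnm
            (fun z => Equiv.Perm.toList_ne_singleton c y z)).symm
        -- disjointness of supports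
        have hdsup : _root_.Disjoint τ.support c.support :=
          Equiv.Perm.Disjoint.disjoint_support hdisj
        have hldm : l.Disjoint m := by
          intro a ha ham
          have h1 : a ∈ τ.support := hsupτ ▸ List.mem_toFinset.mpr ha
          have h2 : a ∈ c.support := hsupm ▸ List.mem_toFinset.mpr ham
          exact Finset.disjoint_left.mp hdsup h1 h2
        have hσeq : σ = τ * c := by rw [hτdef]; group
        -- commute formPerm t with c
        have hdisj_tc : Equiv.Perm.Disjoint (h0 :: t0).formPerm c := by
          rw [Equiv.Perm.disjoint_iff_disjoint_support]
          refine Finset.disjoint_of_subset_left ?_ hdsup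
          refine le_trans (List.support_formPerm_le (h0 :: t0)) ?_
          rw [← hsupτ]
          intro a ha
          exact List.mem_toFinset.mpr (hsub a (List.mem_toFinset.mp ha))
        have hcomm : (h0 :: t0).formPerm * c = c * (h0 :: t0).formPerm := hdisj_tc.commute
        -- the merged list
        have hnlm : (l ++ m).Nodup := List.Nodup.append hnl hnm hldm
        have happ := TwoCyclesAux.formPerm_append l m hl hmnn hnlm
        set gl := l.getLast hl with hgl
        set gm := m.getLast hmnn with hgm
        have hmerge : (l ++ m).formPerm * Equiv.swap gl gm = l.formPerm * m.formPerm := by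
          rw [happ, mul_assoc, Equiv.swap_mul_self, mul_one]
        -- new t list
        have hgmm : gm ∈ m := List.getLast_mem hmnn
        have hgmnt : gm ∉ h0 :: t0 := fun hmem => hldm (hsub gm hmem) hgmm
        have hh0 : h0 = gl := by simpa using hht
        have hform_t' : (gm :: h0 :: t0).formPerm =
            Equiv.swap gl gm * (h0 :: t0).formPerm := by
          rw [List.formPerm_cons_cons, hh0, Equiv.swap_comm]
        refine ⟨l ++ m, gm :: h0 :: t0, by simp [hl], by simp, hnlm,
          List.nodup_cons.mpr ⟨hgmnt, hnt⟩, ?_, ?_, ?_, ?_, ?_⟩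
        · -- σ = (l ++ m).formPerm * (gm :: t).formPerm
          rw [hform_t', ← mul_assoc, hmerge, hσeq, hτeq, mul_assoc, hcomm, ← mul_assoc,
            hformm]
        · -- support
          rw [List.toFinset_append, hsupτ, hsupm, hσeq, hdisj.support_mul]
        · -- length
          simp only [List.length_cons, hlen, hcardτ, hk]
        · -- subset
          intro x hx
          rcases List.mem_cons.mp hx with rfl | hx
          · exact List.mem_append.mpr (Or.inr hgmm)
          · exact List.mem_append.mpr (Or.inl (hsub x hx))
        · -- head = getLast
          simp only [List.head_cons]
          rw [hgm]
          exact (List.getLast_append_right (l := l) hmnn).symm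
  obtain ⟨l, t, hl, ht, hnl, hnt, heq, hsup, hlen, hsub, -⟩ :=
    key σ.cycleFactorsFinset.card σ hσ rfl
  have hm2 : 2 ≤ mOf σ := Equiv.Perm.one_lt_card_support_of_ne_one hσ
  have hllen : l.length = mOf σ := by
    rw [← List.toFinset_card_of_nodup hnl, hsup]; rfl
  have hl2 : 2 ≤ l.length := hllen ▸ hm2
  have hlns : ∀ x : Fin n, l ≠ [x] := by
    intro x hx
    rw [hx] at hl2
    simp at hl2
  have hnOf : nOf σ = t.length := by
    rw [nOf, Equiv.Perm.cycleType_def, Multiset.card_map, hlen]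
    rfl
  refine ⟨l.formPerm, t.formPerm, heq, Or.inr ⟨hm2, List.isCycle_formPerm hnl hl2, ?_⟩, ?_⟩
  · rw [List.support_formPerm_of_nodup l hnl hlns, List.toFinset_card_of_nodup hnl, hllen]
  · rcases eq_or_lt_of_le (Nat.one_le_iff_ne_zero.mpr
      (by simp [List.length_eq_zero_iff] at *; intro h; exact ht h : t.length ≠ 0)) with h1 | h2
    · -- length 1
      obtain ⟨x, hx⟩ := List.length_eq_one_iff.mp h1.symm
      left
      constructor
      · rw [hnOf, ← h1]
      · rw [hx]; exact List.formPerm_singleton x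
    · right
      have ht2 : 2 ≤ t.length := h2
      refine ⟨hnOf ▸ ht2, List.isCycle_formPerm hnt ht2, ?_⟩
      have htns : ∀ x : Fin n, t ≠ [x] := by
        intro x hx
        rw [hx] at ht2
        simp at ht2
      rw [List.support_formPerm_of_nodup t hnt htns, List.toFinset_card_of_nodup hnt, hnOf]
end

section
/- (Hall–Kim–Lee type necessity) If σ ∈ S_n is a product σ = C₁C₂ of cycles C₁, C₂ of lengths l₁ ≥ l₂ ≥ 2, and C₁C₂ is not the cycle decomposition of σ (i.e., the supports of C₁ and C₂ intersect), then l₁ + l₂ ≥ m(σ) + n(σ) and l₁ - l₂ ≤ m(σ) - n(σ), and l₁ + l₂ - m(σ) - n(σ) is even. -/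
open Finset Equiv

namespace HKLAux

open Equiv.Perm

variable {α : Type*} [Fintype α] [DecidableEq α]

lemma sameCycle_nat {f : Equiv.Perm α} {x y : α} (h : f.SameCycle x y) :
    ∃ i : ℕ, (f ^ i) x = y := by
  obtain ⟨i, -, -, h⟩ := h.exists_pow_eq f
  exact ⟨i, h⟩

/-- Peel off the cycle of `a` from `π`. -/
lemma peel (π : Equiv.Perm α) (a : α) (ha : π a ≠ a) :
    ∃ π' : Equiv.Perm α, π = π.cycleOf a * π' ∧ (π.cycleOf a).Disjoint π' ∧
      π'.support = π.support \ (π.cycleOf a).support := by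
  set c := π.cycleOf a with hc
  have key : ∀ z, (c⁻¹ * π) z = z ↔ (π.SameCycle a z ∨ π z = z) := by
    intro z
    have base : (c⁻¹ * π) z = z ↔ π z = c z := by
      rw [Equiv.Perm.mul_apply, Equiv.Perm.inv_eq_iff_eq]
    by_cases h : π.SameCycle a z
    · have hcz : c z = π z := by rw [hc, Equiv.Perm.cycleOf_apply, if_pos h]
      rw [base, hcz]
      simp [h]
    · have hcz : c z = z := by rw [hc, Equiv.Perm.cycleOf_apply, if_neg h]
      rw [base, hcz]
      simp [h]
  refine ⟨c⁻¹ * π, (mul_inv_cancel_left c π).symm, ?_, ?_⟩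
  · intro z
    by_cases h : π.SameCycle a z
    · exact Or.inr ((key z).2 (Or.inl h))
    · exact Or.inl (by rw [hc, Equiv.Perm.cycleOf_apply, if_neg h])
  · ext z
    have hmz : z ∈ (c⁻¹ * π).support ↔ ¬(π.SameCycle a z ∨ π z = z) := by
      rw [Equiv.Perm.mem_support]
      exact not_congr (key z)
    have hcs : z ∈ c.support ↔ π.SameCycle a z := by
      rw [hc, Equiv.Perm.mem_support_cycleOf_iff]
      simp [Equiv.Perm.mem_support.mpr ha]
    rw [hmz, Finset.mem_sdiff, Equiv.Perm.mem_support, hcs]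
    constructor
    · intro h
      exact ⟨fun h2 => h (Or.inr h2), fun h2 => h (Or.inl h2)⟩
    · rintro ⟨h1, h2⟩ (h3 | h3)
      · exact h2 h3
      · exact h1 h3

lemma count_mul {c ρ : Equiv.Perm α} (hc : c.IsCycle) (h : c.Disjoint ρ) :
    (c * ρ).support.card = c.support.card + ρ.support.card ∧
      Multiset.card (c * ρ).cycleType = Multiset.card ρ.cycleType + 1 := by
  refine ⟨h.card_support_mul, ?_⟩
  rw [Equiv.Perm.Disjoint.cycleType_mul h, hc.cycleType]
  simp [add_comm]

/-- Inserting a fixed point `a` into a cycle via a swap yields a cycle. -/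
lemma insert_cycle {c : Equiv.Perm α} (hc : c.IsCycle) {a x : α}
    (ha : a ∉ c.support) (hx : x ∈ c.support) :
    (c * Equiv.swap a x).IsCycle ∧
      (c * Equiv.swap a x).support = insert a c.support := by
  have hax : a ≠ x := fun h => ha (h ▸ hx)
  have hca : c a = a := Equiv.Perm.notMem_support.mp ha
  have hcx : c x ≠ x := Equiv.Perm.mem_support.mp hx
  set d := c * Equiv.swap a x with hd
  have hdx : d x = a := by
    rw [hd, Equiv.Perm.mul_apply, Equiv.swap_apply_right, hca]
  have hda : d a = c x := by
    rw [hd, Equiv.Perm.mul_apply, Equiv.swap_apply_left]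
  have hdy : ∀ y, y ≠ a → y ≠ x → d y = c y := fun y h1 h2 => by
    rw [hd, Equiv.Perm.mul_apply, Equiv.swap_apply_of_ne_of_ne h1 h2]
  have hsupp : d.support = insert a c.support := by
    ext y
    rcases eq_or_ne y a with rfl | h1
    · constructor
      · intro _
        exact Finset.mem_insert_self _ _
      · intro _
        rw [Equiv.Perm.mem_support, hda]
        intro h
        exact ha (h ▸ Equiv.Perm.apply_mem_support.mpr hx)
    · rcases eq_or_ne y x with rfl | h2
      · constructor
        · intro _
          exact Finset.mem_insert.mpr (Or.inr hx)
        · intro _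
          rw [Equiv.Perm.mem_support, hdx]
          exact hax
      · rw [Equiv.Perm.mem_support, hdy y h1 h2, Finset.mem_insert,
          ← Equiv.Perm.mem_support]
        simp [h1]
  have reach : ∀ i : ℕ, ∃ k : ℕ, (d ^ k) x = (c ^ i) x := by
    intro i
    induction i with
    | zero => exact ⟨0, rfl⟩
    | succ i ih =>
      obtain ⟨k, hk⟩ := ih
      rcases eq_or_ne ((c ^ i) x) x with hz | hz
      · refine ⟨2, ?_⟩
        have h2 : (d ^ 2) x = c x := by
          rw [pow_two, Equiv.Perm.mul_apply, hdx, hda]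
        rw [h2, pow_succ', Equiv.Perm.mul_apply, hz]
      · have hz2 : (c ^ i) x ∈ c.support := Equiv.Perm.pow_apply_mem_support.mpr hx
        have hz3 : (c ^ i) x ≠ a := fun h => ha (h ▸ hz2)
        refine ⟨k + 1, ?_⟩
        rw [pow_succ', Equiv.Perm.mul_apply, hk, hdy _ hz3 hz,
          ← Equiv.Perm.mul_apply, ← pow_succ']
  refine ⟨⟨x, by rw [hdx]; exact hax, fun y hy => ?_⟩, hsupp⟩
  have hy' : y ∈ d.support := Equiv.Perm.mem_support.mpr hy
  rw [hsupp, Finset.mem_insert] at hy'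
  rcases hy' with rfl | hy'
  · exact ⟨1, by rw [zpow_one, hdx]⟩
  · obtain ⟨i, hi⟩ := sameCycle_nat (hc.sameCycle hcx (Equiv.Perm.mem_support.mp hy'))
    obtain ⟨k, hk⟩ := reach i
    exact ⟨k, by rw [zpow_natCast, hk, hi]⟩

/-- Merging two disjoint cycles with a swap yields a cycle. -/
lemma merge_cycle {c₁ c₂ : Equiv.Perm α} (h1 : c₁.IsCycle) (h2 : c₂.IsCycle)
    (hd : c₁.Disjoint c₂) {a x : α} (ha : a ∈ c₁.support) (hx : x ∈ c₂.support) :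
    (c₁ * c₂ * Equiv.swap a x).IsCycle ∧
      (c₁ * c₂ * Equiv.swap a x).support = c₁.support ∪ c₂.support := by
  have hds := hd.disjoint_support
  have hac2 : a ∉ c₂.support := Finset.disjoint_left.mp hds ha
  have hxc1 : x ∉ c₁.support := Finset.disjoint_right.mp hds hx
  have hax : a ≠ x := fun h => hac2 (h ▸ hx)
  have hc2a : c₂ a = a := Equiv.Perm.notMem_support.mp hac2
  have hc1x : c₁ x = x := Equiv.Perm.notMem_support.mp hxc1
  set d := c₁ * c₂ * Equiv.swap a x with hd'
  have happ : ∀ z, d z = c₁ (c₂ (Equiv.swap a x z)) := fun z => by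
    rw [hd']; rfl
  have hdx : d x = c₁ a := by rw [happ, Equiv.swap_apply_right, hc2a]
  have hda : d a = c₂ x := by
    have hmem : c₂ x ∈ c₂.support := Equiv.Perm.apply_mem_support.mpr hx
    rw [happ, Equiv.swap_apply_left,
      Equiv.Perm.notMem_support.mp (Finset.disjoint_right.mp hds hmem)]
  have hdy1 : ∀ z, z ∈ c₁.support → z ≠ a → d z = c₁ z := by
    intro z hz h1
    have h2 : z ≠ x := fun h => hxc1 (h ▸ hz)
    rw [happ, Equiv.swap_apply_of_ne_of_ne h1 h2,
      Equiv.Perm.notMem_support.mp (Finset.disjoint_left.mp hds hz)]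
  have hdy2 : ∀ z, z ∈ c₂.support → z ≠ x → d z = c₂ z := by
    intro z hz h2
    have h1 : z ≠ a := fun h => hac2 (h ▸ hz)
    rw [happ, Equiv.swap_apply_of_ne_of_ne h1 h2]
    exact Equiv.Perm.notMem_support.mp
      (Finset.disjoint_right.mp hds (Equiv.Perm.apply_mem_support.mpr hz))
  have hdy0 : ∀ z, z ∉ c₁.support → z ∉ c₂.support → z ≠ a → z ≠ x → d z = z := by
    intro z hz1 hz2 h1 h2
    rw [happ, Equiv.swap_apply_of_ne_of_ne h1 h2,
      Equiv.Perm.notMem_support.mp hz2, Equiv.Perm.notMem_support.mp hz1]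
  have hsupp : d.support = c₁.support ∪ c₂.support := by
    ext y
    rcases eq_or_ne y a with rfl | hy1
    · constructor
      · intro _
        exact Finset.mem_union.mpr (Or.inl ha)
      · intro _
        rw [Equiv.Perm.mem_support, hda]
        intro h
        exact hac2 (h ▸ Equiv.Perm.apply_mem_support.mpr hx)
    · rcases eq_or_ne y x with rfl | hy2
      · constructor
        · intro _
          exact Finset.mem_union.mpr (Or.inr hx)
        · intro _
          rw [Equiv.Perm.mem_support, hdx]
          intro h
          exact hxc1 (h ▸ Equiv.Perm.apply_mem_support.mpr ha)
      · by_cases hz1 : y ∈ c₁.support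
        · rw [Equiv.Perm.mem_support, hdy1 y hz1 hy1]
          simp [Finset.mem_union, hz1, Equiv.Perm.mem_support.mp hz1]
        · by_cases hz2 : y ∈ c₂.support
          · rw [Equiv.Perm.mem_support, hdy2 y hz2 hy2]
            simp [Finset.mem_union, hz1, hz2, Equiv.Perm.mem_support.mp hz2]
          · rw [Equiv.Perm.mem_support, hdy0 y hz1 hz2 hy1 hy2]
            simp [Finset.mem_union, hz1, hz2]
  have reachA : ∀ i : ℕ, ∃ k : ℕ, (d ^ k) x = (c₁ ^ (i + 1)) a := by
    intro i
    induction i with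
    | zero => exact ⟨1, by rw [pow_one, hdx, pow_one]⟩
    | succ i ih =>
      obtain ⟨k, hk⟩ := ih
      have hz2 : (c₁ ^ (i + 1)) a ∈ c₁.support := Equiv.Perm.pow_apply_mem_support.mpr ha
      rcases eq_or_ne ((c₁ ^ (i + 1)) a) a with hz | hz
      · refine ⟨1, ?_⟩
        rw [pow_one, hdx, pow_succ', Equiv.Perm.mul_apply, hz]
      · refine ⟨k + 1, ?_⟩
        rw [pow_succ' d, Equiv.Perm.mul_apply, hk, hdy1 _ hz2 hz,
          ← Equiv.Perm.mul_apply, ← pow_succ']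
  have reachA0 : ∃ k : ℕ, (d ^ k) x = a := by
    obtain ⟨k, hk⟩ := reachA (orderOf c₁ - 1)
    refine ⟨k, ?_⟩
    rw [hk, Nat.sub_add_cancel (orderOf_pos c₁), pow_orderOf_eq_one]
    rfl
  have reachB : ∀ i : ℕ, ∃ k : ℕ, (d ^ k) x = (c₂ ^ i) x := by
    intro i
    induction i with
    | zero => exact ⟨0, rfl⟩
    | succ i ih =>
      obtain ⟨k, hk⟩ := ih
      have hz2 : (c₂ ^ i) x ∈ c₂.support := Equiv.Perm.pow_apply_mem_support.mpr hx
      rcases eq_or_ne ((c₂ ^ i) x) x with hz | hz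
      · obtain ⟨k0, hk0⟩ := reachA0
        refine ⟨k0 + 1, ?_⟩
        rw [pow_succ' d, Equiv.Perm.mul_apply, hk0, hda, pow_succ',
          Equiv.Perm.mul_apply, hz]
      · refine ⟨k + 1, ?_⟩
        rw [pow_succ' d, Equiv.Perm.mul_apply, hk, hdy2 _ hz2 hz,
          ← Equiv.Perm.mul_apply, ← pow_succ']
  refine ⟨⟨x, ?_, fun y hy => ?_⟩, hsupp⟩
  · rw [hdx]
    intro h
    exact hxc1 (h ▸ Equiv.Perm.apply_mem_support.mpr ha)
  · have hy' : y ∈ d.support := Equiv.Perm.mem_support.mpr hy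
    rw [hsupp, Finset.mem_union] at hy'
    rcases hy' with hy' | hy'
    · obtain ⟨i, hi⟩ := sameCycle_nat
        (h1.sameCycle (Equiv.Perm.mem_support.mp ha) (Equiv.Perm.mem_support.mp hy'))
      rcases i with _ | i
      · obtain ⟨k, hk⟩ := reachA0
        exact ⟨k, by rw [zpow_natCast, hk]; exact hi⟩
      · obtain ⟨k, hk⟩ := reachA i
        exact ⟨k, by rw [zpow_natCast, hk]; exact hi⟩
    · obtain ⟨i, hi⟩ := sameCycle_nat
        (h2.sameCycle (Equiv.Perm.mem_support.mp hx) (Equiv.Perm.mem_support.mp hy'))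
      obtain ⟨k, hk⟩ := reachB i
      exact ⟨k, by rw [zpow_natCast, hk, hi]⟩

/-- Multiplying by a swap within one cycle destroys `SameCycle a x`. -/
lemma toggle {π : Equiv.Perm α} {a x : α} (hax : a ≠ x)
    (hsc : π.SameCycle a x) (hρa : (π * Equiv.swap a x) a ≠ a) :
    ¬ (π * Equiv.swap a x).SameCycle a x := by
  set ρ := π * Equiv.swap a x with hρ
  have hρav : ρ a = π x := by rw [hρ, Equiv.Perm.mul_apply, Equiv.swap_apply_left]
  obtain ⟨k0, hk0⟩ := sameCycle_nat hsc.symm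
  have hP : ∃ k, 0 < k ∧ (π ^ k) x = a := by
    refine ⟨k0, ?_, hk0⟩
    rcases Nat.eq_zero_or_pos k0 with rfl | h
    · exact absurd hk0 (by simpa using hax.symm)
    · exact h
  obtain ⟨s, hs0, hsa, hmin⟩ :
      ∃ s, 0 < s ∧ (π ^ s) x = a ∧ ∀ i, 0 < i → i < s → (π ^ i) x ≠ a :=
    ⟨Nat.find hP, (Nat.find_spec hP).1, (Nat.find_spec hP).2,
      fun i h1 h2 hi => Nat.find_min hP h2 ⟨h1, hi⟩⟩
  have hs2 : 2 ≤ s := by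
    by_contra h
    push_neg at h
    have hs1 : s = 1 := by omega
    subst hs1
    rw [pow_one] at hsa
    exact hρa (by rw [hρav, hsa])
  set S : Set α := {z | z = a ∨ ∃ i, 0 < i ∧ i < s ∧ (π ^ i) x = z} with hS
  have hxS : x ∉ S := by
    rintro (h | ⟨i, h1, h2, hi⟩)
    · exact hax h.symm
    · have hcon : (π ^ (s - i)) x = a := by
        have h3 : (π ^ (s - i)) ((π ^ i) x) = a := by
          rw [← Equiv.Perm.mul_apply, ← pow_add, Nat.sub_add_cancel (le_of_lt h2)]
          exact hsa
        rwa [hi] at h3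
      exact hmin (s - i) (by omega) (by omega) hcon
  have hstep : ∀ z ∈ S, ρ z ∈ S := by
    rintro z (rfl | ⟨i, h1, h2, rfl⟩)
    · rw [hρav]
      exact Or.inr ⟨1, by omega, by omega, pow_one π ▸ rfl⟩
    · have hza : (π ^ i) x ≠ a := hmin i h1 h2
      have hzx : (π ^ i) x ≠ x := by
        intro h
        apply hmin (s - i) (by omega) (by omega)
        rw [← Nat.sub_add_cancel (le_of_lt h2), pow_add] at hsa
        rw [Equiv.Perm.mul_apply, h] at hsa
        exact hsa
      have heval : ρ ((π ^ i) x) = (π ^ (i + 1)) x := by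
        rw [hρ, Equiv.Perm.mul_apply, Equiv.swap_apply_of_ne_of_ne hza hzx,
          pow_succ', Equiv.Perm.mul_apply]
      rw [heval]
      rcases eq_or_lt_of_le (Nat.succ_le_of_lt h2) with h | h
      · left
        rw [← h] at hsa
        exact hsa
      · exact Or.inr ⟨i + 1, by omega, h, rfl⟩
  have horb : ∀ k : ℕ, (ρ ^ k) a ∈ S := by
    intro k
    induction k with
    | zero => exact Or.inl rfl
    | succ k ih =>
      rw [pow_succ', Equiv.Perm.mul_apply]
      exact hstep _ ih
  intro hcon
  obtain ⟨k, hk⟩ := sameCycle_nat hcon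
  exact hxS (hk ▸ horb k)

/-- Transition counts : both points fixed. -/
lemma trans_one {π : Equiv.Perm α} {a x : α} (hax : a ≠ x)
    (hπa : π a = a) (hπx : π x = x) :
    (π * Equiv.swap a x).support.card = π.support.card + 2 ∧
      Multiset.card (π * Equiv.swap a x).cycleType = Multiset.card π.cycleType + 1 := by
  have hdisj : π.Disjoint (Equiv.swap a x) := by
    intro z
    rcases eq_or_ne z a with rfl | h1
    · exact Or.inl hπa
    rcases eq_or_ne z x with rfl | h2
    · exact Or.inl hπx
    · exact Or.inr (Equiv.swap_apply_of_ne_of_ne h1 h2)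
  constructor
  · rw [hdisj.card_support_mul, Equiv.Perm.card_support_swap hax]
  · rw [Equiv.Perm.Disjoint.cycleType_mul hdisj, (Equiv.Perm.isCycle_swap hax).cycleType]
    simp

/-- Transition counts : `a` fixed, `x` moved (insertion). -/
lemma trans_fixed_left {π : Equiv.Perm α} {a x : α} (hπa : π a = a) (hπx : π x ≠ x) :
    (π * Equiv.swap a x).support.card = π.support.card + 1 ∧
      Multiset.card (π * Equiv.swap a x).cycleType = Multiset.card π.cycleType := by
  have hax : a ≠ x := fun h => hπx (h ▸ hπa)
  obtain ⟨π', hπ, hdisj, hsupp⟩ := peel π x hπx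
  set c := π.cycleOf x with hc
  have hcyc : c.IsCycle := Equiv.Perm.isCycle_cycleOf π hπx
  have hxc : x ∈ c.support := by
    rw [hc, Equiv.Perm.mem_support_cycleOf_iff]
    exact ⟨Equiv.Perm.SameCycle.refl _ _, Equiv.Perm.mem_support.mpr hπx⟩
  have ha' : a ∉ π.support := Equiv.Perm.notMem_support.mpr hπa
  have hac : a ∉ c.support := fun h => ha' (Equiv.Perm.support_cycleOf_le π x h)
  obtain ⟨hcyc2, hsupp2⟩ := insert_cycle hcyc hac hxc
  have hdS : (Equiv.swap a x).Disjoint π' := by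
    rw [Equiv.Perm.disjoint_iff_disjoint_support, Equiv.Perm.support_swap hax,
      Finset.disjoint_left]
    intro z hz
    rw [hsupp, Finset.mem_sdiff]
    rcases Finset.mem_insert.mp hz with rfl | hz'
    · exact fun h => ha' h.1
    · rw [Finset.mem_singleton] at hz'
      subst hz'
      exact fun h => h.2 hxc
  have heq : π * Equiv.swap a x = (c * Equiv.swap a x) * π' := by
    rw [hπ, mul_assoc, ← hdS.commute.eq, ← mul_assoc]
  have hdisj2 : (c * Equiv.swap a x).Disjoint π' := by
    rw [Equiv.Perm.disjoint_iff_disjoint_support, hsupp2, Finset.disjoint_left]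
    intro z hz
    rw [hsupp, Finset.mem_sdiff]
    rcases Finset.mem_insert.mp hz with rfl | hz'
    · exact fun h => ha' h.1
    · exact fun h => h.2 hz'
  obtain ⟨hm1, hn1⟩ := count_mul hcyc hdisj
  obtain ⟨hm2, hn2⟩ := count_mul hcyc2 hdisj2
  have e1 : π.support.card = c.support.card + π'.support.card := by
    rw [hπ]; exact hm1
  have e2 : Multiset.card π.cycleType = Multiset.card π'.cycleType + 1 := by
    rw [hπ]; exact hn1
  have e3 : (π * Equiv.swap a x).support.card
      = (c * Equiv.swap a x).support.card + π'.support.card := by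
    rw [heq]; exact hm2
  have e4 : Multiset.card (π * Equiv.swap a x).cycleType
      = Multiset.card π'.cycleType + 1 := by
    rw [heq]; exact hn2
  have e5 : (c * Equiv.swap a x).support.card = c.support.card + 1 := by
    rw [hsupp2, Finset.card_insert_of_notMem hac]
  constructor <;> omega

/-- Transition counts : `a` moved, `x` fixed (insertion). -/
lemma trans_fixed_right {π : Equiv.Perm α} {a x : α} (hπa : π a ≠ a) (hπx : π x = x) :
    (π * Equiv.swap a x).support.card = π.support.card + 1 ∧
      Multiset.card (π * Equiv.swap a x).cycleType = Multiset.card π.cycleType := by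
  rw [Equiv.swap_comm]
  exact trans_fixed_left hπx hπa

/-- Transition counts : merge of two distinct cycles. -/
lemma trans_merge {π : Equiv.Perm α} {a x : α} (hπa : π a ≠ a) (hπx : π x ≠ x)
    (hns : ¬ π.SameCycle a x) :
    (π * Equiv.swap a x).support.card = π.support.card ∧
      Multiset.card π.cycleType = Multiset.card (π * Equiv.swap a x).cycleType + 1 := by
  obtain ⟨π₁, hπ, hd1, hs1⟩ := peel π a hπa
  set c₁ := π.cycleOf a with hc₁
  have hcyc1 : c₁.IsCycle := Equiv.Perm.isCycle_cycleOf π hπa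
  have hac1 : a ∈ c₁.support := by
    rw [hc₁, Equiv.Perm.mem_support_cycleOf_iff]
    exact ⟨Equiv.Perm.SameCycle.refl _ _, Equiv.Perm.mem_support.mpr hπa⟩
  have hxc1 : x ∉ c₁.support := by
    rw [hc₁, Equiv.Perm.mem_support_cycleOf_iff]
    exact fun h => hns h.1
  have hx1 : x ∈ π₁.support := by
    rw [hs1, Finset.mem_sdiff]
    exact ⟨Equiv.Perm.mem_support.mpr hπx, hxc1⟩
  have hπ₁x : π₁ x ≠ x := Equiv.Perm.mem_support.mp hx1
  obtain ⟨π₂, hπ₁, hd2, hs2⟩ := peel π₁ x hπ₁x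
  set c₂ := π₁.cycleOf x with hc₂
  have hcyc2 : c₂.IsCycle := Equiv.Perm.isCycle_cycleOf π₁ hπ₁x
  have hxc2 : x ∈ c₂.support := by
    rw [hc₂, Equiv.Perm.mem_support_cycleOf_iff]
    exact ⟨Equiv.Perm.SameCycle.refl _ _, hx1⟩
  have hsub2 : c₂.support ⊆ π₁.support := Equiv.Perm.support_cycleOf_le π₁ x
  have hd12 : c₁.Disjoint c₂ := by
    rw [Equiv.Perm.disjoint_iff_disjoint_support, Finset.disjoint_left]
    intro z hz hz2
    have hmem := hsub2 hz2
    rw [hs1, Finset.mem_sdiff] at hmem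
    exact hmem.2 hz
  have hac2 : a ∉ c₂.support := Finset.disjoint_left.mp
    (Equiv.Perm.disjoint_iff_disjoint_support.mp hd12) hac1
  obtain ⟨hcycM, hsuppM⟩ := merge_cycle hcyc1 hcyc2 hd12 hac1 hxc2
  have hax : a ≠ x := fun h => hxc1 (h ▸ hac1)
  have hdS : (Equiv.swap a x).Disjoint π₂ := by
    rw [Equiv.Perm.disjoint_iff_disjoint_support, Equiv.Perm.support_swap hax,
      Finset.disjoint_left]
    intro z hz
    rw [hs2, Finset.mem_sdiff]
    rcases Finset.mem_insert.mp hz with rfl | hz'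
    · intro h
      rw [hs1, Finset.mem_sdiff] at h
      exact h.1.2 hac1
    · rw [Finset.mem_singleton] at hz'
      subst hz'
      exact fun h => h.2 hxc2
  have heq : π * Equiv.swap a x = (c₁ * c₂ * Equiv.swap a x) * π₂ := by
    rw [hπ, hπ₁, mul_assoc, mul_assoc, ← hdS.commute.eq]
    simp only [← mul_assoc]
  have hdisjM : (c₁ * c₂ * Equiv.swap a x).Disjoint π₂ := by
    rw [Equiv.Perm.disjoint_iff_disjoint_support, hsuppM, Finset.disjoint_left]
    intro z hz
    rw [hs2, Finset.mem_sdiff]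
    rcases Finset.mem_union.mp hz with hz' | hz'
    · intro h
      rw [hs1, Finset.mem_sdiff] at h
      exact h.1.2 hz'
    · exact fun h => h.2 hz'
  obtain ⟨hm1, hn1⟩ := count_mul hcyc1 hd1
  obtain ⟨hm2, hn2⟩ := count_mul hcyc2 hd2
  obtain ⟨hmM, hnM⟩ := count_mul hcycM hdisjM
  have hcard : (c₁.support ∪ c₂.support).card = c₁.support.card + c₂.support.card :=
    Finset.card_union_of_disjoint (Equiv.Perm.disjoint_iff_disjoint_support.mp hd12)
  have e1 : π.support.card = c₁.support.card + π₁.support.card := by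
    rw [hπ]; exact hm1
  have e2 : Multiset.card π.cycleType = Multiset.card π₁.cycleType + 1 := by
    rw [hπ]; exact hn1
  have e3 : π₁.support.card = c₂.support.card + π₂.support.card := by
    rw [hπ₁]; exact hm2
  have e4 : Multiset.card π₁.cycleType = Multiset.card π₂.cycleType + 1 := by
    rw [hπ₁]; exact hn2
  have e5 : (π * Equiv.swap a x).support.card
      = (c₁ * c₂ * Equiv.swap a x).support.card + π₂.support.card := by
    rw [heq]; exact hmM
  have e6 : Multiset.card (π * Equiv.swap a x).cycleType
      = Multiset.card π₂.cycleType + 1 := by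
    rw [heq]; exact hnM
  have e7 : (c₁ * c₂ * Equiv.swap a x).support.card
      = c₁.support.card + c₂.support.card := by
    rw [hsuppM]; exact hcard
  constructor <;> omega

/-- The main single-step lemma. -/
lemma step_main (π : Equiv.Perm α) {a x : α} (hax : a ≠ x) :
    ((π * Equiv.swap a x).support.card + Multiset.card (π * Equiv.swap a x).cycleType
        + (if (π * Equiv.swap a x) x = x then 2 else 0)
      ≤ π.support.card + Multiset.card π.cycleType + (if π a = a then 2 else 0) + 1)
    ∧ π.support.card + Multiset.card (π * Equiv.swap a x).cycleType
      ≤ (π * Equiv.swap a x).support.card + Multiset.card π.cycleType + 1 := by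
  have hevx : (π * Equiv.swap a x) x = π a := by
    rw [Equiv.Perm.mul_apply, Equiv.swap_apply_right]
  by_cases hπa : π a = a <;> by_cases hπx : π x = x
  · obtain ⟨hm, hn⟩ := trans_one hax hπa hπx
    rw [if_pos hπa, if_neg (by rw [hevx, hπa]; exact hax), hm, hn]
    omega
  · obtain ⟨hm, hn⟩ := trans_fixed_left hπa hπx
    rw [if_pos hπa, if_neg (by rw [hevx, hπa]; exact hax), hm, hn]
    omega
  · obtain ⟨hm, hn⟩ := trans_fixed_right hπa hπx
    have hne : (π * Equiv.swap a x) x ≠ x := by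
      rw [hevx]
      intro h
      rw [← hπx] at h
      exact hax (π.injective h)
    rw [if_neg hπa, if_neg hne, hm, hn]
    omega
  · by_cases hsc : π.SameCycle a x
    · set ρ := π * Equiv.swap a x with hρ
      have hπeq : ρ * Equiv.swap a x = π := by
        rw [hρ, mul_assoc, Equiv.swap_mul_self, mul_one]
      have hρxv : ρ x = π a := hevx
      by_cases h1 : ρ a = a <;> by_cases h2 : ρ x = x
      · obtain ⟨hm, hn⟩ := trans_one hax h1 h2
        rw [hπeq] at hm hn
        rw [if_neg hπa, if_pos h2]
        omega
      · obtain ⟨hm, hn⟩ := trans_fixed_left h1 h2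
        rw [hπeq] at hm hn
        rw [if_neg hπa, if_neg h2]
        omega
      · obtain ⟨hm, hn⟩ := trans_fixed_right h1 h2
        rw [hπeq] at hm hn
        rw [if_neg hπa, if_pos h2]
        omega
      · have hns2 : ¬ ρ.SameCycle a x := toggle hax hsc h1
        obtain ⟨hm, hn⟩ := trans_merge h1 h2 hns2
        rw [hπeq] at hm hn
        rw [if_neg hπa, if_neg h2]
        omega
    · obtain ⟨hm, hn⟩ := trans_merge hπa hπx hsc
      have hne : (π * Equiv.swap a x) x ≠ x := by
        rw [hevx]
        intro h
        exact hsc ⟨1, by rw [zpow_one]; exact h⟩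
      rw [if_neg hπa, if_neg hne, hm, hn]
      omega

/-- Main induction over the word of transpositions extracted from a list. -/
lemma main_list : ∀ (l : List α) (a : α) (π : Equiv.Perm α), (a :: l).Nodup →
    ((π * (a :: l).formPerm).support.card
        + Multiset.card (π * (a :: l).formPerm).cycleType
      ≤ π.support.card + Multiset.card π.cycleType + (if π a = a then 2 else 0) + l.length)
    ∧ π.support.card + Multiset.card (π * (a :: l).formPerm).cycleType
      ≤ (π * (a :: l).formPerm).support.card + Multiset.card π.cycleType + l.length := by
  intro l
  induction l with
  | nil =>
    intro a π _
    simp [List.formPerm_singleton]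
  | cons x l ih =>
    intro a π hnd
    have hax : a ≠ x := by
      intro h
      exact (List.nodup_cons.mp hnd).1 (h ▸ (List.mem_cons_self : x ∈ x :: l))
    have hnd' : (x :: l).Nodup := (List.nodup_cons.mp hnd).2
    obtain ⟨s1, s2⟩ := step_main π hax
    obtain ⟨i1, i2⟩ := ih x (π * Equiv.swap a x) hnd'
    rw [List.formPerm_cons_cons, ← mul_assoc]
    constructor
    · calc (π * Equiv.swap a x * (x :: l).formPerm).support.card
            + Multiset.card (π * Equiv.swap a x * (x :: l).formPerm).cycleType
          ≤ (π * Equiv.swap a x).support.card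
            + Multiset.card (π * Equiv.swap a x).cycleType
            + (if (π * Equiv.swap a x) x = x then 2 else 0) + l.length := by
            have := i1
            omega
        _ ≤ π.support.card + Multiset.card π.cycleType
            + (if π a = a then 2 else 0) + 1 + l.length := by
            have := s1
            omega
        _ = π.support.card + Multiset.card π.cycleType
            + (if π a = a then 2 else 0) + (x :: l).length := by
            rw [List.length_cons]
            omega
    · calc π.support.card
            + Multiset.card (π * Equiv.swap a x * (x :: l).formPerm).cycleType
          ≤ (π * Equiv.swap a x).support.card + 1
            + Multiset.card (π * Equiv.swap a x * (x :: l).formPerm).cycleType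
            - Multiset.card (π * Equiv.swap a x).cycleType
            + Multiset.card π.cycleType := by
            -- from s2 : π.m + n(π·t) ≤ m(π·t) + n(π) + 1
            omega
        _ ≤ (π * Equiv.swap a x * (x :: l).formPerm).support.card
            + Multiset.card π.cycleType + (x :: l).length := by
            rw [List.length_cons]
            omega

end HKLAux

theorem product_of_two_cycles_necessity {n : ℕ} (σ C₁ C₂ : Equiv.Perm (Fin n))
    (l₁ l₂ : ℕ) (h21 : 2 ≤ l₂) (h12 : l₂ ≤ l₁)
    (hC₁ : C₁.IsCycle) (hC₂ : C₂.IsCycle)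
    (hl₁ : C₁.support.card = l₁) (hl₂ : C₂.support.card = l₂)
    (hσ : σ = C₁ * C₂)
    (hmeet : (C₁.support ∩ C₂.support).Nonempty) :
    mOf σ + nOf σ ≤ l₁ + l₂ ∧
      l₁ + nOf σ ≤ l₂ + mOf σ ∧
      ∃ s : ℕ, l₁ + l₂ = mOf σ + nOf σ + 2 * s := by
  classical
  obtain ⟨a, hmem⟩ := hmeet
  rw [Finset.mem_inter] at hmem
  obtain ⟨ha1, ha2⟩ := hmem
  have hC₂a : C₂ a ≠ a := Equiv.Perm.mem_support.mp ha2
  have hcyc : C₂.cycleOf a = C₂ := hC₂.cycleOf_eq hC₂a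
  have hform : (C₂.toList a).formPerm = C₂ := by
    rw [Equiv.Perm.formPerm_toList, hcyc]
  have hnd : (C₂.toList a).Nodup := Equiv.Perm.nodup_toList _ _
  have hlen : (C₂.toList a).length = l₂ := by
    rw [Equiv.Perm.length_toList, hcyc, hl₂]
  obtain ⟨l₂', hl₂'⟩ : ∃ m, l₂ = m + 1 := ⟨l₂ - 1, by omega⟩
  obtain ⟨xs, hxs⟩ : ∃ xs, C₂.toList a = a :: xs := by
    refine ⟨(List.range l₂').map fun k => (C₂ ^ (k + 1)) a, ?_⟩
    rw [Equiv.Perm.toList, hcyc, hl₂, hl₂', ← List.range_map_iterate, List.range_succ_eq_map]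
    simp [List.map_map, Function.comp_def, pow_succ', Equiv.Perm.iterate_eq_pow]
  have hxslen : xs.length = l₂ - 1 := by
    have := hlen
    rw [hxs, List.length_cons] at this
    omega
  have hndax : (a :: xs).Nodup := hxs ▸ hnd
  have hσ' : σ = C₁ * (a :: xs).formPerm := by rw [hσ, ← hform, hxs]
  obtain ⟨b1, b2⟩ := HKLAux.main_list xs a C₁ hndax
  rw [← hσ'] at b1 b2
  have hC₁a : ¬ (C₁ a = a) := Equiv.Perm.mem_support.mp ha1
  rw [if_neg hC₁a] at b1
  have hnC₁ : Multiset.card C₁.cycleType = 1 :=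
    Equiv.Perm.card_cycleType_eq_one.mpr hC₁
  have hb1 : mOf σ + nOf σ ≤ l₁ + l₂ := by
    have := b1
    rw [hl₁, hnC₁, hxslen] at this
    unfold mOf nOf
    omega
  have hb2 : l₁ + nOf σ ≤ l₂ + mOf σ := by
    have := b2
    rw [hl₁, hnC₁, hxslen] at this
    unfold mOf nOf
    omega
  refine ⟨hb1, hb2, ?_⟩
  -- parity via sign
  have hsign1 : Equiv.Perm.sign σ = (-1 : ℤˣ) ^ (mOf σ + nOf σ) := by
    rw [Equiv.Perm.sign_of_cycleType, Equiv.Perm.sum_cycleType]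
    rfl
  have hsign2 : Equiv.Perm.sign σ = (-1 : ℤˣ) ^ (l₁ + l₂) := by
    rw [hσ, map_mul, hC₁.sign, hC₂.sign, hl₁, hl₂]
    rw [pow_add]
    exact neg_mul_neg _ _
  have hpar : (mOf σ + nOf σ) % 2 = (l₁ + l₂) % 2 := by
    have h := hsign1.symm.trans hsign2
    rcases Nat.even_or_odd (mOf σ + nOf σ) with hp | hp <;>
      rcases Nat.even_or_odd (l₁ + l₂) with hq | hq
    · rw [Nat.even_iff] at hp hq
      omega
    · exfalso
      rw [hp.neg_one_pow, hq.neg_one_pow] at h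
      have := congrArg Units.val h
      simp at this
    · exfalso
      rw [hp.neg_one_pow, hq.neg_one_pow] at h
      have := congrArg Units.val h
      simp at this
    · rw [Nat.odd_iff] at hp hq
      omega
  have hM : mOf σ + nOf σ ≤ l₁ + l₂ := hb1
  set M := mOf σ + nOf σ with hMdef
  refine ⟨(l₁ + l₂ - M) / 2, by omega⟩
end

section
/- For all natural numbers l₁ ≥ l₂ ≥ 2 with l₁ ≤ n, and every σ ∈ S_n such that l₁ + l₂ = m(σ) + n(σ) + 2s for some s ∈ ℕ and l₁ - l₂ ≤ m(σ) - n(σ), there exist cycles C₁, C₂ ∈ S_n of lengths l₁ and l₂ respectively with σ = C₁C₂. -/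
open Finset Equiv

section Helpers
open List

variable {α : Type*} [DecidableEq α]

lemma formPerm_append_cons (M T : List α) (hM : M ≠ []) :
    formPerm (M ++ T) = formPerm M * formPerm (M.getLast hM :: T) := by
  induction M with
  | nil => simp at hM
  | cons a M ih =>
    cases M with
    | nil => simp
    | cons b M' =>
      have hg : (a :: b :: M').getLast hM = (b :: M').getLast (by simp) :=
        List.getLast_cons _
      rw [cons_append, cons_append, formPerm_cons_cons, formPerm_cons_cons,
        ← cons_append, ih (by simp), mul_assoc, hg]

lemma formPerm_append_singleton' (M : List α) (hM : M ≠ []) (z : α) :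
    formPerm (M ++ [z]) = formPerm M * swap (M.getLast hM) z := by
  rw [formPerm_append_cons M [z] hM, formPerm_pair]

lemma exists_rot_head (L : List α) (hL : L.Nodup) (x : α) (hx : x ∈ L) :
    ∃ R, (x :: R) ~ L ∧ (x :: R).formPerm = L.formPerm := by
  obtain ⟨pre, post, rfl⟩ := List.append_of_mem hx
  refine ⟨post ++ pre, ?_, ?_⟩
  · calc x :: (post ++ pre) ~ (pre ++ [x]) ++ post := by
          simpa using List.perm_append_comm (l₁ := x :: post) (l₂ := pre)
      _ ~ _ := by simp
  · have h1 : (x :: (post ++ pre)) = (pre ++ x :: post).rotate pre.length := by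
      rw [List.rotate_eq_drop_append_take (by simp)]
      simp
    rw [h1, List.formPerm_rotate _ hL]

lemma exists_rot_last (L : List α) (hL : L.Nodup) (x : α) (hx : x ∈ L) :
    ∃ R, (R ++ [x]) ~ L ∧ (R ++ [x]).formPerm = L.formPerm := by
  obtain ⟨pre, post, rfl⟩ := List.append_of_mem hx
  refine ⟨post ++ pre, ?_, ?_⟩
  · calc (post ++ pre) ++ [x] ~ (pre ++ [x]) ++ post := by
          simpa using List.perm_append_comm (l₁ := post) (l₂ := pre ++ [x])
      _ ~ _ := by simp
  · have h1 : ((post ++ pre) ++ [x]) = (pre ++ x :: post).rotate (pre.length + 1) := by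
      rw [List.rotate_eq_drop_append_take (by simp)]
      have h2 : List.drop (pre.length + 1) pre = [] := List.drop_eq_nil_of_le (by omega)
      have h3 : List.take (pre.length + 1) pre = pre := List.take_of_length_le (by omega)
      simp [List.take_append, List.drop_append, h2, h3]
    rw [h1, List.formPerm_rotate _ hL]

lemma formPerm_split : ∀ (d j : ℕ) (x : α) (A : List α), (x::A).Nodup → 1 ≤ j →
    j ≤ A.length → A.length - j = d →
    formPerm (x :: A.take j) * formPerm (A.drop (j-1) ++ [x]) = formPerm A := by
  intro d
  induction d with
  | zero =>
    intro j x A hn hj1 hjk hd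
    have hj : j = A.length := by omega
    subst hj
    have hA : A ≠ [] := by rintro rfl; simp at hj1
    have hAx : (A ++ [x]).Nodup := (List.perm_append_singleton x A).symm.nodup hn
    have h1 : x :: A = (A ++ [x]).rotate A.length := by
      rw [List.rotate_eq_drop_append_take (by simp)]
      simp
    have h2 : A.take A.length = A := by simp
    have h3 : A.drop (A.length - 1) ++ [x] = [A.getLast hA, x] := by
      rw [List.drop_eq_getElem_cons (by have := List.length_pos_iff.mpr hA; omega)]
      have h4 : A.length - 1 + 1 = A.length := by
        have := List.length_pos_iff.mpr hA; omega
      rw [h4, List.drop_length, List.getLast_eq_getElem]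
      rfl
    rw [h2, h3, h1, List.formPerm_rotate _ hAx,
      formPerm_append_singleton' A hA x, formPerm_pair, mul_assoc]
    simp
  | succ d ih =>
    intro j x A hn hj1 hjk hd
    have hjlt : j < A.length := by omega
    have hj1lt : j - 1 < A.length := by omega
    have hne : (x :: A.take j) ≠ [] := by simp
    have ht : A.take j ≠ [] := by
      apply List.ne_nil_of_length_pos
      simp [List.length_take]; omega
    have hgl : (x :: A.take j).getLast hne = A[j-1]'hj1lt := by
      rw [List.getLast_cons ht, List.getLast_eq_getElem]
      rw [show ((A.take j)[(A.take j).length - 1]'(by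
            have := List.length_pos_iff.mpr ht; omega)) =
          ((A.take j)[j-1]'(by simp [List.length_take]; omega)) by congr 1; simp [List.length_take]; omega]
      exact List.getElem_take ..
    have e1 : formPerm (x :: A.take (j+1)) =
        formPerm (x :: A.take j) * swap (A[j-1]'hj1lt) (A[j]'hjlt) := by
      have h9 : x :: A.take (j+1) = (x :: A.take j) ++ [A[j]'hjlt] := by
        rw [cons_append, List.take_concat_get']
      rw [h9, formPerm_append_singleton' _ hne, hgl]
    have e3 : formPerm (A.drop (j-1) ++ [x]) =
        swap (A[j-1]'hj1lt) (A[j]'hjlt) * formPerm (A.drop j ++ [x]) := by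
      rw [List.drop_eq_getElem_cons (i := j-1) hj1lt]
      have h7 : j - 1 + 1 = j := by omega
      rw [h7, List.drop_eq_getElem_cons hjlt, cons_append, cons_append,
        formPerm_cons_cons, ← cons_append]
    have ihj := ih (j+1) x A hn (by omega) (by omega) (by omega)
    have h8 : j + 1 - 1 = j := by omega
    rw [h8] at ihj
    rw [e3, ← mul_assoc, ← e1, ihj]

lemma formPerm_split2 : ∀ (d j : ℕ) (A : List α), A.Nodup → 1 ≤ j →
    j ≤ A.length → A.length - j = d →
    formPerm (A.take j) * formPerm (A.drop (j-1)) = formPerm A := by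
  intro d
  induction d with
  | zero =>
    intro j A hn hj1 hjk hd
    have hj : j = A.length := by omega
    subst hj
    have hA : A ≠ [] := by rintro rfl; simp at hj1
    have h3 : A.drop (A.length - 1) = [A.getLast hA] := by
      rw [List.drop_eq_getElem_cons (by have := List.length_pos_iff.mpr hA; omega)]
      have h4 : A.length - 1 + 1 = A.length := by
        have := List.length_pos_iff.mpr hA; omega
      rw [h4, List.drop_length, List.getLast_eq_getElem]
    rw [h3]
    simp
  | succ d ih =>
    intro j A hn hj1 hjk hd
    have hjlt : j < A.length := by omega
    have hj1lt : j - 1 < A.length := by omega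
    have ht : A.take j ≠ [] := by
      apply List.ne_nil_of_length_pos
      simp [List.length_take]; omega
    have hgl : (A.take j).getLast ht = A[j-1]'hj1lt := by
      rw [List.getLast_eq_getElem]
      rw [show ((A.take j)[(A.take j).length - 1]'(by
            have := List.length_pos_iff.mpr ht; omega)) =
          ((A.take j)[j-1]'(by simp [List.length_take]; omega)) by congr 1; simp [List.length_take]; omega]
      exact List.getElem_take ..
    have e1 : formPerm (A.take (j+1)) =
        formPerm (A.take j) * swap (A[j-1]'hj1lt) (A[j]'hjlt) := by
      have h9 : A.take (j+1) = (A.take j) ++ [A[j]'hjlt] := by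
        rw [List.take_concat_get']
      rw [h9, formPerm_append_singleton' _ ht, hgl]
    have e3 : formPerm (A.drop (j-1)) =
        swap (A[j-1]'hj1lt) (A[j]'hjlt) * formPerm (A.drop j) := by
      rw [List.drop_eq_getElem_cons (i := j-1) hj1lt]
      have h7 : j - 1 + 1 = j := by omega
      rw [h7, List.drop_eq_getElem_cons hjlt, formPerm_cons_cons]
    have ihj := ih (j+1) A hn (by omega) (by omega) (by omega)
    have h8 : j + 1 - 1 = j := by omega
    rw [h8] at ihj
    rw [e3, ← mul_assoc, ← e1, ihj]


variable {β : Type*} [DecidableEq β] [Fintype β]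

lemma mem_toList_mem_support {p : Equiv.Perm β} {x y : β} (h : y ∈ p.toList x) :
    y ∈ p.support := by
  rw [Equiv.Perm.mem_toList_iff] at h
  exact (h.1.mem_support_iff).mp h.2

lemma exists_decomp (σ : Equiv.Perm β) :
    σ = 1 ∨ ∃ c τ : Equiv.Perm β, c.IsCycle ∧ c.Disjoint τ ∧ σ = c * τ := by
  induction σ using Equiv.Perm.cycle_induction_on with
  | base_one => exact Or.inl rfl
  | base_cycles σ hσ => exact Or.inr ⟨σ, 1, hσ, Equiv.Perm.disjoint_one_right σ, (mul_one σ).symm⟩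
  | induction_disjoint σ τ hd hc _ _ => exact Or.inr ⟨σ, τ, hc, hd, rfl⟩

lemma two_mul_card_cycleType_le (σ : Equiv.Perm β) :
    2 * (Multiset.card σ.cycleType) ≤ σ.support.card := by
  have h := Multiset.card_nsmul_le_sum (s := σ.cycleType) (a := 2)
    (fun x hx => Equiv.Perm.two_le_of_mem_cycleType hx)
  rw [Equiv.Perm.sum_cycleType] at h
  simpa [Multiset.card_nsmul_le_sum, smul_eq_mul, mul_comm] using h

lemma exists_fresh {n : ℕ} (s : Finset (Fin n)) (h : s.card < n) : ∃ z, z ∉ s := by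
  by_contra hc
  push_neg at hc
  have : s = Finset.univ := Finset.eq_univ_iff_forall.mpr hc
  rw [this, Finset.card_univ, Fintype.card_fin] at h
  omega

lemma disjoint_formPerm_of_support {c τ : Equiv.Perm β} (hd : c.Disjoint τ)
    (L : List β) (hL : ∀ y ∈ L, y ∈ τ.support) : c.Disjoint (formPerm L) := by
  intro x
  by_cases hx : formPerm L x = x
  · exact Or.inr hx
  · left
    have hxL : x ∈ L := List.mem_of_formPerm_apply_ne hx
    have : x ∈ τ.support := hL x hxL
    rcases hd x with h | h
    · exact h
    · exact absurd h (Equiv.Perm.mem_support.mp this)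

lemma splice_arith (l₁ l₂ m cc k mτ : ℕ) (hl21 : l₂ ≤ l₁) (hcc2 : 2 ≤ cc)
    (hk2 : 2 ≤ k) (hmin : l₁ + l₂ = m + cc) (hdiff : l₁ + cc ≤ l₂ + m)
    (hm_eq : m = k + mτ) (hmτ2 : 2 * (cc - 1) ≤ mτ) (hmτ1 : 2 ≤ mτ) :
    ∃ j, 1 ≤ j ∧ j ≤ k ∧ j < l₁ ∧ 1 ≤ l₂ - (k + 1 - j) ∧
      l₂ - (k + 1 - j) ≤ l₁ - j ∧ 2 ≤ l₁ - j ∧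
      (l₁ - j) + (l₂ - (k + 1 - j)) + (k + 1) = l₁ + l₂ ∧
      (l₁ - j) + (l₂ - (k + 1 - j)) = mτ + (cc - 1) ∧
      (l₁ - j) + (cc - 1) ≤ (l₂ - (k + 1 - j)) + mτ := by
  have hl₂cc : cc ≤ l₂ := by omega
  refine ⟨max (max 1 (k + 2 - l₂)) (k - (m - cc - (l₁ - l₂)) / 2), ?_, ?_, ?_, ?_, ?_, ?_, ?_, ?_, ?_⟩ <;> omega

end Helpers

open List in
set_option maxHeartbeats 1000000 in
lemma main_lemma {n : ℕ} : ∀ (N : ℕ) (σ : Equiv.Perm (Fin n)) (l₁ l₂ : ℕ), l₁ + l₂ ≤ N → 1 ≤ l₂ →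
    l₂ ≤ l₁ → l₁ ≤ n →
    (∃ s, l₁ + l₂ = σ.support.card + Multiset.card σ.cycleType + 2 * s) →
    l₁ + Multiset.card σ.cycleType ≤ l₂ + σ.support.card →
    ∃ L₁ L₂ : List (Fin n), L₁.Nodup ∧ L₂.Nodup ∧ L₁.length = l₁ ∧ L₂.length = l₂ ∧
      σ = L₁.formPerm * L₂.formPerm ∧
      (l₂ = 1 ∨ ∃ x, x ∈ L₁ ∧ x ∈ L₂) ∧
      (l₁ + l₂ = σ.support.card + Multiset.card σ.cycleType →
        ∀ y : Fin n, y ∈ L₁ ∨ y ∈ L₂ → y ∈ σ.support) := by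
  intro N
  induction N with
  | zero => intro σ l₁ l₂ hN hl2 _ _ _ _; omega
  | succ N ih =>
    intro σ l₁ l₂ hN hl2 hl21 hl1n hsum hdiff
    by_cases hσ1 : σ = 1
    · subst hσ1
      simp only [Equiv.Perm.support_one, Finset.card_empty, Equiv.Perm.cycleType_one,
        Multiset.card_zero, add_zero, zero_add] at hdiff ⊢
      have hl12 : l₁ = l₂ := le_antisymm hdiff hl21
      set L : List (Fin n) := (List.finRange n).take l₁ with hL
      have hlen : L.length = l₁ := by
        simp [hL, List.length_take, List.length_finRange]; omega
      have hnd : L.Nodup := (List.take_sublist _ _).nodup (List.nodup_finRange n)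
      have hne : L ≠ [] := by
        apply List.ne_nil_of_length_pos; omega
      refine ⟨L, L.reverse, hnd, by simp [hnd], hlen, by simp [hlen, hl12], ?_, ?_, ?_⟩
      · rw [List.formPerm_reverse, mul_inv_cancel]
      · exact Or.inr ⟨L.head hne, List.head_mem hne, by simp [List.head_mem hne]⟩
      · intro h; omega
    · have hcc1 : 1 ≤ Multiset.card σ.cycleType :=
        Equiv.Perm.card_cycleType_pos.mpr hσ1
      have hmcc : 2 * Multiset.card σ.cycleType ≤ σ.support.card :=
        two_mul_card_cycleType_le σ
      by_cases hmin : l₁ + l₂ = σ.support.card + Multiset.card σ.cycleType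
      · by_cases hcyc : Multiset.card σ.cycleType = 1
        · have hc : σ.IsCycle := Equiv.Perm.card_cycleType_eq_one.mp hcyc
          obtain ⟨x₀, hx₀⟩ := Finset.card_pos.mp (show 0 < σ.support.card by omega)
          set A := σ.toList x₀ with hA
          have hAnd : A.Nodup := Equiv.Perm.nodup_toList σ x₀
          have hcy : σ.cycleOf x₀ = σ := hc.cycleOf_eq (Equiv.Perm.mem_support.mp hx₀)
          have hAfp : A.formPerm = σ := by rw [hA, Equiv.Perm.formPerm_toList, hcy]
          have hAlen : A.length = σ.support.card := by
            rw [hA, Equiv.Perm.length_toList, hcy]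
          have hjk : l₁ ≤ A.length := by omega
          have hj1 : 1 ≤ l₁ := by omega
          have hsplit := formPerm_split2 (A.length - l₁) l₁ A hAnd hj1 hjk rfl
          have hl₁lt : l₁ - 1 < A.length := by omega
          refine ⟨A.take l₁, A.drop (l₁ - 1), (List.take_sublist _ _).nodup hAnd,
            (List.drop_sublist _ _).nodup hAnd, by simp [List.length_take]; omega,
            by simp [List.length_drop]; omega, by rw [hsplit, hAfp], ?_, ?_⟩
          · refine Or.inr ⟨A[l₁-1]'hl₁lt, ?_, ?_⟩
            · have h1 : (A.take l₁)[l₁-1]'(by simp [List.length_take]; omega) = A[l₁-1]'hl₁lt :=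
                List.getElem_take ..
              rw [← h1]
              exact List.getElem_mem _
            · rw [List.drop_eq_getElem_cons hl₁lt]
              exact List.mem_cons_self
          · intro _ y hy
            have hyA : y ∈ A := by
              rcases hy with hy | hy
              · exact (List.take_sublist _ _).mem hy
              · exact (List.drop_sublist _ _).mem hy
            exact mem_toList_mem_support hyA
        · obtain ⟨c, τ, hc, hdisj, hστ⟩ := (exists_decomp σ).resolve_left hσ1
          have hcc2 : 2 ≤ Multiset.card σ.cycleType := by omega
          have hk2 : 2 ≤ c.support.card := hc.two_le_card_support
          have hsupp : σ.support = c.support ∪ τ.support := by rw [hστ, hdisj.support_mul]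
          have hdsupp : _root_.Disjoint c.support τ.support := hdisj.disjoint_support
          have hm_eq : σ.support.card = c.support.card + τ.support.card := by
            rw [hsupp, Finset.card_union_of_disjoint hdsupp]
          have hct : σ.cycleType = {c.support.card} + τ.cycleType := by
            rw [hστ, hdisj.cycleType_mul, hc.cycleType]
          have hccτ : Multiset.card τ.cycleType = Multiset.card σ.cycleType - 1 := by
            rw [hct]; simp
          have hmτ2 : 2 * (Multiset.card σ.cycleType - 1) ≤ τ.support.card := by
            have := two_mul_card_cycleType_le τ
            rw [hccτ] at this
            exact this
          have hτ1 : τ ≠ 1 := by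
            intro h
            rw [h] at hccτ
            simp [Equiv.Perm.cycleType_one] at hccτ
            omega
          have hmτ1 : 2 ≤ τ.support.card := Equiv.Perm.two_le_card_support_of_ne_one hτ1
          set k := c.support.card with hkdef
          obtain ⟨j, hj1, hjk, hjl₁, hl₂', hord, hl₁'2, hsumN, hsum', hdiff'⟩ :=
            splice_arith l₁ l₂ σ.support.card (Multiset.card σ.cycleType) k τ.support.card
              hl21 hcc2 hk2 hmin hdiff hm_eq hmτ2 hmτ1
          obtain ⟨L₁, L₂, hnd₁, hnd₂, hlen₁, hlen₂, hprod, hinv, hside⟩ :=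
            ih τ (l₁ - j) (l₂ - (k + 1 - j)) (by omega) hl₂' hord (by omega)
              ⟨0, by omega⟩ (by omega)
          have hsideτ : ∀ y : Fin n, y ∈ L₁ ∨ y ∈ L₂ → y ∈ τ.support := hside (by omega)
          have hl₁'2 : 2 ≤ l₁ - j := by omega
          have hL₁ne : L₁ ≠ [] := List.ne_nil_of_length_pos (by omega)
          have hanchor : ∃ x, x ∈ L₁ ∧ ∃ R₂ : List (Fin n), R₂.Nodup ∧ x ∉ R₂ ∧
              R₂.length = l₂ - (k + 1 - j) - 1 ∧ (∀ y ∈ R₂, y ∈ L₂) ∧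
              (x :: R₂).formPerm = L₂.formPerm := by
            rcases hinv with h1 | ⟨x, hx₁, hx₂⟩
            · refine ⟨L₁.getLast hL₁ne, List.getLast_mem _, [], by simp, by simp,
                by simp; omega, by simp, ?_⟩
              obtain ⟨y, hy⟩ := List.length_eq_one_iff.mp (show L₂.length = 1 by omega)
              rw [hy]
              simp
            · obtain ⟨R₂, hp₂, hf₂⟩ := exists_rot_head L₂ hnd₂ x hx₂
              have hnd' : (x :: R₂).Nodup := hp₂.symm.nodup hnd₂
              refine ⟨x, hx₁, R₂, (List.nodup_cons.mp hnd').2, (List.nodup_cons.mp hnd').1,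
                ?_, ?_, hf₂⟩
              · have := hp₂.length_eq; simp at this; omega
              · intro y hy; exact hp₂.mem_iff.mp (List.mem_cons_of_mem _ hy)
          obtain ⟨x, hxL₁, R₂, hR₂nd, hxR₂, hR₂len, hR₂sub, hfp₂⟩ := hanchor
          -- the cycle c as a list
          obtain ⟨x₁, hx₁c⟩ := Finset.card_pos.mp (show 0 < c.support.card by omega)
          set A := c.toList x₁ with hA
          have hAnd : A.Nodup := Equiv.Perm.nodup_toList c x₁
          have hcy : c.cycleOf x₁ = c := hc.cycleOf_eq (Equiv.Perm.mem_support.mp hx₁c)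
          have hAfp : A.formPerm = c := by rw [hA, Equiv.Perm.formPerm_toList, hcy]
          have hAlen : A.length = k := by rw [hA, Equiv.Perm.length_toList, hcy]
          have hAsub : ∀ y ∈ A, y ∈ c.support := fun y hy => mem_toList_mem_support hy
          have hL₁sub : ∀ y ∈ L₁, y ∈ τ.support := fun y hy => hsideτ y (Or.inl hy)
          have hL₂sub : ∀ y ∈ L₂, y ∈ τ.support := fun y hy => hsideτ y (Or.inr hy)
          have hdisjLA : ∀ y : Fin n, y ∈ τ.support → y ∉ A := fun y hyτ hyA =>
            (Finset.disjoint_right.mp hdsupp hyτ) (hAsub y hyA)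
          have hxτ : x ∈ τ.support := hL₁sub x hxL₁
          have hxA : x ∉ A := hdisjLA x hxτ
          have hnxA : (x :: A).Nodup := List.nodup_cons.mpr ⟨hxA, hAnd⟩
          have hsplit := formPerm_split (A.length - j) j x A hnxA hj1 (by omega) rfl
          obtain ⟨R₁, hp₁, hf₁⟩ := exists_rot_last L₁ hnd₁ x hxL₁
          have hjA : j - 1 < A.length := by omega
          have hmemtake : (A[j-1]'hjA) ∈ A.take j := by
            have h1 : (A.take j)[j-1]'(by simp [List.length_take]; omega) = A[j-1]'hjA :=
              List.getElem_take ..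
            rw [← h1]
            exact List.getElem_mem _
          have hmemdrop : (A[j-1]'hjA) ∈ A.drop (j-1) := by
            rw [List.drop_eq_getElem_cons hjA]
            exact List.mem_cons_self
          refine ⟨(R₁ ++ [x]) ++ A.take j, (A.drop (j-1) ++ [x]) ++ R₂, ?_, ?_, ?_, ?_, ?_, ?_, ?_⟩
          · -- Nodup L₁''
            refine List.Nodup.append (hp₁.symm.nodup hnd₁) ((List.take_sublist _ _).nodup hAnd) ?_
            intro a ha hta
            exact hdisjLA a (hL₁sub a (hp₁.mem_iff.mp ha)) ((List.take_sublist _ _).mem hta)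
          · -- Nodup L₂''
            refine List.Nodup.append ?_ hR₂nd ?_
            · refine (List.perm_append_singleton x _).symm.nodup (List.nodup_cons.mpr ⟨?_, (List.drop_sublist _ _).nodup hAnd⟩)
              intro hxd
              exact hxA ((List.drop_sublist _ _).mem hxd)
            · intro a ha haR₂
              have haτ : a ∈ τ.support := hL₂sub a (hR₂sub a haR₂)
              rcases List.mem_append.mp ha with h | h
              · exact hdisjLA a haτ ((List.drop_sublist _ _).mem h)
              · rw [List.mem_singleton] at h
                subst h
                exact hxR₂ haR₂
          · -- length L₁''
            have := hp₁.length_eq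
            simp only [List.length_append, List.length_take, List.length_singleton] at this ⊢
            omega
          · -- length L₂''
            simp only [List.length_append, List.length_drop, List.length_singleton, hR₂len]
            omega
          · -- the product
            have hcomm : c * L₁.formPerm = L₁.formPerm * c :=
              ((disjoint_formPerm_of_support hdisj L₁ hL₁sub).commute).eq
            have e₁ : ((R₁ ++ [x]) ++ A.take j).formPerm
                = L₁.formPerm * (x :: A.take j).formPerm := by
              rw [formPerm_append_cons _ _ (by simp), List.getLast_concat, hf₁]
            have e₂ : ((A.drop (j-1) ++ [x]) ++ R₂).formPerm
                = (A.drop (j-1) ++ [x]).formPerm * L₂.formPerm := by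
              rw [formPerm_append_cons _ _ (by simp), List.getLast_concat, hfp₂]
            rw [e₁, e₂]
            calc σ = c * (L₁.formPerm * L₂.formPerm) := by rw [hστ, hprod]
              _ = (c * L₁.formPerm) * L₂.formPerm := by rw [mul_assoc]
              _ = (L₁.formPerm * c) * L₂.formPerm := by rw [hcomm]
              _ = (L₁.formPerm * ((x :: A.take j).formPerm
                    * (A.drop (j-1) ++ [x]).formPerm)) * L₂.formPerm := by rw [hsplit, hAfp]
              _ = (L₁.formPerm * (x :: A.take j).formPerm)
                    * ((A.drop (j-1) ++ [x]).formPerm * L₂.formPerm) := by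
                  simp [mul_assoc]
          · -- shared point
            exact Or.inr ⟨A[j-1]'hjA, List.mem_append_right _ hmemtake,
              List.mem_append_left _ (List.mem_append_left _ hmemdrop)⟩
          · -- support condition
            intro _ y hy
            rw [hsupp, Finset.mem_union]
            rcases hy with hy | hy
            · rcases List.mem_append.mp hy with h | h
              · exact Or.inr (hL₁sub y (hp₁.mem_iff.mp h))
              · exact Or.inl (hAsub y ((List.take_sublist _ _).mem h))
            · rcases List.mem_append.mp hy with h | h
              · rcases List.mem_append.mp h with h' | h'
                · exact Or.inl (hAsub y ((List.drop_sublist _ _).mem h'))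
                · rw [List.mem_singleton] at h'
                  subst h'
                  exact Or.inr hxτ
              · exact Or.inr (hL₂sub y (hR₂sub y h))
      · obtain ⟨s, hs⟩ := hsum
        have hl₂2 : 2 ≤ l₂ := by omega
        obtain ⟨L₁, L₂, hnd₁, hnd₂, hlen₁, hlen₂, hprod, hinv, -⟩ :=
          ih σ (l₁ - 1) (l₂ - 1) (by omega) (by omega) (by omega) (by omega)
            ⟨s - 1, by omega⟩ (by omega)
        by_cases hc2 : l₂ = 2
        · -- CASE A : discard the singleton L₂, extend L₁ by fresh z, L₂' = [z, x]
          have hL₂1 : L₂.length = 1 := by omega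
          obtain ⟨y, hy⟩ := List.length_eq_one_iff.mp hL₂1
          have hfp₂ : L₂.formPerm = 1 := by rw [hy]; exact List.formPerm_singleton y
          have hσL₁ : σ = L₁.formPerm := by rw [hprod, hfp₂, mul_one]
          have hL₁ne : L₁ ≠ [] := by
            intro h
            exact hσ1 (by simp [hσL₁, h])
          set x := L₁.getLast hL₁ne with hx
          have hxL₁ : x ∈ L₁ := List.getLast_mem hL₁ne
          obtain ⟨z, hz⟩ := exists_fresh L₁.toFinset
            (by rw [List.toFinset_card_of_nodup hnd₁, hlen₁]; omega)
          rw [List.mem_toFinset] at hz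
          have hzx : z ≠ x := fun h => hz (h ▸ hxL₁)
          refine ⟨L₁ ++ [z], [z, x], ?_, by simp [hzx], by simp [hlen₁]; omega, by simp [hc2], ?_, ?_, ?_⟩
          · exact (List.perm_append_singleton z L₁).symm.nodup (by simp [hz, hnd₁])
          · rw [formPerm_append_singleton' L₁ hL₁ne z, formPerm_pair, ← hx, mul_assoc,
              Equiv.swap_comm z x, Equiv.swap_mul_self, mul_one, hσL₁]
          · exact Or.inr ⟨x, List.mem_append_left _ hxL₁, by simp⟩
          · intro h; exact absurd h hmin
        · -- l₂ ≥ 3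
          have hl₂3 : 3 ≤ l₂ := by omega
          obtain ⟨x, hxL₁, hxL₂⟩ := hinv.resolve_left (by omega)
          by_cases hcross : (∃ u ∈ L₁, u ∉ L₂) ∧ (∃ v ∈ L₂, v ∉ L₁)
          · -- CASE B1 : cross extension
            obtain ⟨⟨u, huL₁, huL₂⟩, ⟨v, hvL₂, hvL₁⟩⟩ := hcross
            obtain ⟨R₁, hp₁, hf₁⟩ := exists_rot_last L₁ hnd₁ u huL₁
            obtain ⟨R₂, hp₂, hf₂⟩ := exists_rot_head L₂ hnd₂ v hvL₂
            have hnd₁' : (R₁ ++ [u]).Nodup := hp₁.symm.nodup hnd₁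
            have hnd₂' : (v :: R₂).Nodup := hp₂.symm.nodup hnd₂
            have hvR : v ∉ R₁ ++ [u] := fun h => hvL₁ (hp₁.mem_iff.mp h)
            have huR : u ∉ v :: R₂ := fun h => huL₂ (hp₂.mem_iff.mp h)
            refine ⟨(R₁ ++ [u]) ++ [v], u :: v :: R₂,
              (List.perm_append_singleton v _).symm.nodup (by simp [hvR, hnd₁']),
              by simp [huR, hnd₂'], ?_, ?_, ?_, ?_, ?_⟩
            · have := hp₁.length_eq
              simp at this ⊢
              omega
            · have := hp₂.length_eq
              simp at this ⊢
              omega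
            · rw [formPerm_append_singleton' _ (by simp) v, List.getLast_concat,
                formPerm_cons_cons, hf₁, hf₂, mul_assoc, ← mul_assoc (Equiv.swap u v),
                Equiv.swap_mul_self, one_mul, hprod]
            · exact Or.inr ⟨x, List.mem_append_left _ (hp₁.mem_iff.mpr hxL₁),
                List.mem_cons_of_mem _ (hp₂.mem_iff.mpr hxL₂)⟩
            · intro h; exact absurd h hmin
          · -- CASE B2 : nested, use anchor x and fresh z
            have hsub : (∀ u ∈ L₁, u ∈ L₂) ∨ (∀ v ∈ L₂, v ∈ L₁) := by
              by_contra h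
              push_neg at h
              obtain ⟨⟨u, hu1, hu2⟩, ⟨v, hv1, hv2⟩⟩ := h
              exact hcross ⟨⟨u, hu1, hu2⟩, ⟨v, hv1, hv2⟩⟩
            have hcard : (L₁.toFinset ∪ L₂.toFinset).card < n := by
              rcases hsub with h | h
              · have : L₁.toFinset ∪ L₂.toFinset = L₂.toFinset := by
                  apply Finset.union_eq_right.mpr
                  intro a ha
                  rw [List.mem_toFinset] at ha ⊢
                  exact h a ha
                rw [this, List.toFinset_card_of_nodup hnd₂, hlen₂]
                omega
              · have : L₁.toFinset ∪ L₂.toFinset = L₁.toFinset := by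
                  apply Finset.union_eq_left.mpr
                  intro a ha
                  rw [List.mem_toFinset] at ha ⊢
                  exact h a ha
                rw [this, List.toFinset_card_of_nodup hnd₁, hlen₁]
                omega
            obtain ⟨z, hz⟩ := exists_fresh _ hcard
            rw [Finset.mem_union, List.mem_toFinset, List.mem_toFinset] at hz
            push_neg at hz
            obtain ⟨hzL₁, hzL₂⟩ := hz
            obtain ⟨R₁, hp₁, hf₁⟩ := exists_rot_last L₁ hnd₁ x hxL₁
            obtain ⟨R₂, hp₂, hf₂⟩ := exists_rot_head L₂ hnd₂ x hxL₂
            have hnd₁' : (R₁ ++ [x]).Nodup := hp₁.symm.nodup hnd₁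
            have hnd₂' : (x :: R₂).Nodup := hp₂.symm.nodup hnd₂
            have hzR : z ∉ R₁ ++ [x] := fun h => hzL₁ (hp₁.mem_iff.mp h)
            have hzR₂ : z ∉ x :: R₂ := fun h => hzL₂ (hp₂.mem_iff.mp h)
            refine ⟨(R₁ ++ [x]) ++ [z], z :: x :: R₂,
              (List.perm_append_singleton z _).symm.nodup (by simp [hzR, hnd₁']),
              by simp [hzR₂, hnd₂'], ?_, ?_, ?_, ?_, ?_⟩
            · have := hp₁.length_eq
              simp at this ⊢
              omega
            · have := hp₂.length_eq
              simp at this ⊢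
              omega
            · rw [formPerm_append_singleton' _ (by simp) z, List.getLast_concat,
                formPerm_cons_cons, hf₁, hf₂, mul_assoc, ← mul_assoc (Equiv.swap x z),
                Equiv.swap_comm z x, Equiv.swap_mul_self, one_mul, hprod]
            · exact Or.inr ⟨x, List.mem_append_left _ (by simp),
                List.mem_cons_of_mem _ (by simp)⟩
            · intro h; exact absurd h hmin

theorem product_of_two_cycles_sufficiency {n : ℕ} (σ : Equiv.Perm (Fin n))
    (l₁ l₂ : ℕ) (h21 : 2 ≤ l₂) (h12 : l₂ ≤ l₁) (h1n : l₁ ≤ n)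
    (hsum : ∃ s : ℕ, l₁ + l₂ = mOf σ + nOf σ + 2 * s)
    (hdiff : l₁ + nOf σ ≤ l₂ + mOf σ) :
    ∃ C₁ C₂ : Equiv.Perm (Fin n),
      C₁.IsCycle ∧ C₂.IsCycle ∧ C₁.support.card = l₁ ∧ C₂.support.card = l₂ ∧
        σ = C₁ * C₂ := by
  obtain ⟨L₁, L₂, hnd₁, hnd₂, hlen₁, hlen₂, hprod, -, -⟩ :=
    main_lemma (l₁ + l₂) σ l₁ l₂ le_rfl (by omega) h12 h1n hsum hdiff
  have hne₁ : ∀ x : Fin n, L₁ ≠ [x] := by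
    intro x h
    rw [h] at hlen₁
    simp at hlen₁
    omega
  have hne₂ : ∀ x : Fin n, L₂ ≠ [x] := by
    intro x h
    rw [h] at hlen₂
    simp at hlen₂
    omega
  refine ⟨L₁.formPerm, L₂.formPerm,
    List.isCycle_formPerm hnd₁ (by omega),
    List.isCycle_formPerm hnd₂ (by omega), ?_, ?_, hprod⟩
  · rw [List.support_formPerm_of_nodup _ hnd₁ hne₁, List.toFinset_card_of_nodup hnd₁, hlen₁]
  · rw [List.support_formPerm_of_nodup _ hnd₂ hne₂, List.toFinset_card_of_nodup hnd₂, hlen₂]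
end

section
/- An element p of the universal sofic group satisfies cyc_i(p) = 0 for all 2 ≤ i < ∞ if and only if p^m is conjugate to p for every positive integer m. -/
open Filter Finset Topology
open scoped Classical

/-- Normalized Hamming distance between two permutations of `Fin m`. -/
noncomputable def dHam {m : ℕ} (p q : Equiv.Perm (Fin m)) : ℝ :=
  ((Finset.univ.filter fun a => p a ≠ q a).card : ℝ) / m

lemma dHam_nonneg {m : ℕ} (p q : Equiv.Perm (Fin m)) : 0 ≤ dHam p q := by
  unfold dHam; positivity

lemma dHam_mul_le {m : ℕ} (p q : Equiv.Perm (Fin m)) :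
    dHam (p * q) 1 ≤ dHam p 1 + dHam q 1 := by
  unfold dHam
  rw [← add_div]
  have hsub : (Finset.univ.filter fun a => (p * q) a ≠ (1 : Equiv.Perm (Fin m)) a) ⊆
      (Finset.univ.filter fun a => p a ≠ (1 : Equiv.Perm (Fin m)) a) ∪
        (Finset.univ.filter fun a => q a ≠ (1 : Equiv.Perm (Fin m)) a) := by
    intro a ha
    simp only [Finset.mem_filter, Finset.mem_union] at *
    simp only [mem_filter, mem_univ, true_and, mem_union, Equiv.Perm.mul_apply,
      Equiv.Perm.one_apply] at *
    by_contra h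
    push_neg at h
    exact ha (by rw [h.2, h.1])
  have hcard := (Finset.card_le_card hsub).trans (Finset.card_union_le _ _)
  have : ((Finset.univ.filter fun a => (p * q) a ≠ (1 : Equiv.Perm (Fin m)) a).card : ℝ) ≤
      ((Finset.univ.filter fun a => p a ≠ (1 : Equiv.Perm (Fin m)) a).card : ℝ) +
        ((Finset.univ.filter fun a => q a ≠ (1 : Equiv.Perm (Fin m)) a).card : ℝ) := by
    exact_mod_cast hcard
  gcongr

lemma dHam_inv {m : ℕ} (p : Equiv.Perm (Fin m)) : dHam p⁻¹ 1 = dHam p 1 := by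
  unfold dHam
  have h : (Finset.univ.filter fun a => p⁻¹ a ≠ (1 : Equiv.Perm (Fin m)) a) =
      (Finset.univ.filter fun a => p a ≠ (1 : Equiv.Perm (Fin m)) a) := by
    apply Finset.filter_congr
    intro a _
    simp only [Equiv.Perm.one_apply, ne_eq]
    constructor
    · intro h h'; exact h (by rw [Equiv.Perm.inv_eq_iff_eq]; exact h'.symm)
    · intro h h'; rw [Equiv.Perm.inv_eq_iff_eq] at h'; exact h h'.symm
  rw [h]

lemma dHam_conj {m : ℕ} (g p : Equiv.Perm (Fin m)) :
    dHam (g * p * g⁻¹) 1 = dHam p 1 := by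
  unfold dHam
  congr 2
  apply Finset.card_bij' (fun a _ => g⁻¹ a) (fun a _ => g a)
  · intro a ha
    simp only [Finset.mem_filter] at *
    simp only [mem_filter, mem_univ, true_and, Equiv.Perm.mul_apply,
      Equiv.Perm.one_apply, ne_eq] at *
    intro h
    apply ha
    have : g (p (g⁻¹ a)) = g (g⁻¹ a) := congrArg g h
    simpa using this
  · intro a ha
    simp only [Finset.mem_filter] at *
    simp only [mem_filter, mem_univ, true_and, Equiv.Perm.mul_apply,
      Equiv.Perm.one_apply, ne_eq] at *
    intro h
    apply ha
    have := congrArg (fun x => g⁻¹ x) h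
    simpa using this
  · intro a _; simp
  · intro a _; simp

variable (ω : Ultrafilter ℕ) (n : ℕ → ℕ)

/-- The sequences of permutations whose normalized Hamming distance to the
identity tends to `0` along `ω`: the kernel of the metric ultraproduct. -/
noncomputable def soficNull : Subgroup (∀ k, Equiv.Perm (Fin (n k))) where
  carrier := {p | Tendsto (fun k => dHam (p k) 1) (ω : Filter ℕ) (𝓝 0)}
  one_mem' := by
    have : (fun k => dHam ((1 : ∀ k, Equiv.Perm (Fin (n k))) k) 1) = fun _ => (0 : ℝ) := by
      funext k
      simp [dHam]
    simp only [Set.mem_setOf_eq, this]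
    exact tendsto_const_nhds
  mul_mem' := by
    intro p q hp hq
    simp only [Set.mem_setOf_eq] at *
    have h0 : Tendsto (fun k => dHam (p k) 1 + dHam (q k) 1) (ω : Filter ℕ) (𝓝 0) := by
      simpa using hp.add hq
    exact squeeze_zero (fun k => dHam_nonneg _ _) (fun k => dHam_mul_le (p k) (q k)) h0
  inv_mem' := by
    intro p hp
    simp only [Set.mem_setOf_eq] at *
    simpa [dHam_inv] using hp

instance soficNull_normal : (soficNull ω n).Normal := by
  constructor
  intro p hp g
  simp only [soficNull, Subgroup.mem_mk, Set.mem_setOf_eq] at *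
  simpa [dHam_conj] using hp

/-- The universal sofic group: the metric ultraproduct of the `S_{n_k}`. -/
noncomputable abbrev UnivSofic := (∀ k, Equiv.Perm (Fin (n k))) ⧸ soficNull ω n

/-- The quotient map onto the universal sofic group. -/
noncomputable def usMk : (∀ k, Equiv.Perm (Fin (n k))) →* UnivSofic ω n :=
  QuotientGroup.mk' (soficNull ω n)

/-- For `q ∈ S_m`, `cycN q i` is `i` times the number of cycles of `q` of length `i`
(equivalently, the number of points lying in orbits of cardinality `i`). -/
noncomputable def cycN {m : ℕ} (q : Equiv.Perm (Fin m)) (i : ℕ) : ℕ :=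
  (Finset.univ.filter fun a =>
    (Finset.univ.filter fun b => q.SameCycle a b).card = i).card

variable {ω n} in
/-- `cyc_i(p) = lim_{k→ω} cyc_i(p_k)/n_k`. -/
noncomputable def cycSeq (p : ∀ k, Equiv.Perm (Fin (n k))) (i : ℕ) : ℝ :=
  limUnder (ω : Filter ℕ) (fun k => (cycN (p k) i : ℝ) / n k)

variable {ω n} in
/-- `cyc_∞(p) = 1 - Σ_{i ≥ 1} cyc_i(p)`. -/
noncomputable def cycInf (p : ∀ k, Equiv.Perm (Fin (n k))) : ℝ :=
  1 - ∑' i : ℕ, cycSeq (ω := ω) p (i + 1)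

variable {ω n} in
/-- `m(p) = lim_{k→ω} |support(p_k)|/n_k`. -/
noncomputable def mSeq (p : ∀ k, Equiv.Perm (Fin (n k))) : ℝ :=
  limUnder (ω : Filter ℕ) (fun k => ((p k).support.card : ℝ) / n k)

variable {ω n} in
/-- `n(p) = lim_{k→ω} n(p_k)/n_k`, with `n(σ)` the number of nontrivial cycles of `σ`. -/
noncomputable def nSeq (p : ∀ k, Equiv.Perm (Fin (n k))) : ℝ :=
  limUnder (ω : Filter ℕ) (fun k => ((p k).cycleType.card : ℝ) / n k)

variable {ω n} in
/-- The induced metric on the ultraproduct, computed on representatives. -/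
noncomputable def dSeq (p q : ∀ k, Equiv.Perm (Fin (n k))) : ℝ :=
  limUnder (ω : Filter ℕ) (fun k => dHam (p k) (q k))



section Orbits

variable {N : ℕ} (σ : Equiv.Perm (Fin N))

/-- The orbit (cycle) of `x` under `σ`, as a finset. -/
noncomputable def orbS (x : Fin N) : Finset (Fin N) :=
  Finset.univ.filter fun b => σ.SameCycle x b

/-- The size of the orbit of `x`. -/
noncomputable def oSz (x : Fin N) : ℕ := (orbS σ x).card

variable {σ}

lemma mem_orbS {x y : Fin N} : y ∈ orbS σ x ↔ σ.SameCycle x y := by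
  simp [orbS]

lemma self_mem_orbS (x : Fin N) : x ∈ orbS σ x :=
  mem_orbS.2 (Equiv.Perm.SameCycle.refl σ x)

lemma oSz_pos (x : Fin N) : 0 < oSz σ x :=
  Finset.card_pos.2 ⟨x, self_mem_orbS x⟩

lemma orbS_eq_of_sameCycle {x y : Fin N} (h : σ.SameCycle x y) :
    orbS σ x = orbS σ y := by
  ext z
  simp only [mem_orbS]
  exact ⟨fun hz => h.symm.trans hz, fun hz => h.trans hz⟩

lemma oSz_eq_of_sameCycle {x y : Fin N} (h : σ.SameCycle x y) : oSz σ x = oSz σ y := by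
  rw [oSz, oSz, orbS_eq_of_sameCycle h]

lemma pow_mem_orbS (x : Fin N) (j : ℕ) : (σ ^ j) x ∈ orbS σ x :=
  mem_orbS.2 ⟨(j : ℤ), by simp⟩

lemma orbS_eq_support_cycleOf {x : Fin N} (hx : σ x ≠ x) :
    orbS σ x = (σ.cycleOf x).support := by
  ext y
  rw [mem_orbS, Equiv.Perm.mem_support_cycleOf_iff]
  exact ⟨fun h => ⟨h, Equiv.Perm.mem_support.2 hx⟩, fun h => h.1⟩

lemma pow_mod_oSz (x : Fin N) (j : ℕ) : (σ ^ (j % oSz σ x)) x = (σ ^ j) x := by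
  by_cases hx : σ x = x
  · rw [Equiv.Perm.pow_apply_eq_self_of_apply_eq_self hx,
      Equiv.Perm.pow_apply_eq_self_of_apply_eq_self hx]
  · have h : oSz σ x = (σ.cycleOf x).support.card := by
      rw [oSz, orbS_eq_support_cycleOf hx]
    rw [h]
    exact σ.pow_mod_card_support_cycleOf_self_apply j x

lemma orbS_eq_image (x : Fin N) :
    orbS σ x = (Finset.range (oSz σ x)).image (fun j => (σ ^ j) x) := by
  apply Finset.Subset.antisymm
  · intro y hy
    obtain ⟨i, -, hi⟩ := (mem_orbS.1 hy).exists_pow_eq'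
    exact Finset.mem_image.2 ⟨i % oSz σ x,
      Finset.mem_range.2 (Nat.mod_lt _ (oSz_pos x)), by rw [pow_mod_oSz]; exact hi⟩
  · intro y hy
    obtain ⟨j, -, rfl⟩ := Finset.mem_image.1 hy
    exact pow_mem_orbS x j

lemma pow_oSz_injOn (x : Fin N) :
    Set.InjOn (fun j => (σ ^ j) x) (Finset.range (oSz σ x)) := by
  apply Finset.card_image_iff.1
  rw [← orbS_eq_image, Finset.card_range]
  rfl

lemma pow_apply_eq_iff_mod {x : Fin N} {i j : ℕ} :
    (σ ^ i) x = (σ ^ j) x ↔ i % oSz σ x = j % oSz σ x := by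
  constructor
  · intro h
    exact pow_oSz_injOn (σ := σ) x
      (by simpa using Nat.mod_lt i (oSz_pos (σ := σ) x))
      (by simpa using Nat.mod_lt j (oSz_pos (σ := σ) x))
      (by simp only []; rw [pow_mod_oSz, pow_mod_oSz]; exact h)
  · intro h
    rw [← pow_mod_oSz x i, ← pow_mod_oSz x j, h]

lemma oSz_eq_one_iff {x : Fin N} : oSz σ x = 1 ↔ σ x = x := by
  constructor
  · intro h
    have h1 : x ∈ orbS σ x := self_mem_orbS x
    have h2 : σ x ∈ orbS σ x := by simpa using pow_mem_orbS x 1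
    exact Finset.card_le_one.1 h.le _ h2 _ h1
  · intro h
    have : orbS σ x = {x} := by
      ext y
      simp only [mem_orbS, Finset.mem_singleton]
      constructor
      · rintro ⟨i, hi⟩
        rw [← hi]
        exact Equiv.Perm.zpow_apply_eq_self_of_apply_eq_self h i
      · rintro rfl
        exact Equiv.Perm.SameCycle.refl _ _
    rw [oSz, this, Finset.card_singleton]

/-- The chosen base point of the orbit of `x`. -/
noncomputable def bpt (x : Fin N) : Fin N :=
  (orbS σ x).min' ⟨x, self_mem_orbS x⟩

lemma bpt_mem (x : Fin N) : bpt (σ := σ) x ∈ orbS σ x :=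
  Finset.min'_mem _ _

lemma sameCycle_bpt (x : Fin N) : σ.SameCycle x (bpt (σ := σ) x) :=
  mem_orbS.1 (bpt_mem x)

lemma bpt_eq_of_sameCycle {x y : Fin N} (h : σ.SameCycle x y) :
    bpt (σ := σ) x = bpt (σ := σ) y := by
  simp only [bpt, orbS_eq_of_sameCycle h]

lemma oSz_bpt (x : Fin N) : oSz σ (bpt (σ := σ) x) = oSz σ x :=
  (oSz_eq_of_sameCycle (sameCycle_bpt x)).symm

lemma exists_pow_bpt (x : Fin N) : ∃ j : ℕ, (σ ^ j) (bpt (σ := σ) x) = x := by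
  obtain ⟨i, -, hi⟩ := (sameCycle_bpt x).symm.exists_pow_eq'
  exact ⟨i, hi⟩

/-- The index of `x` within its orbit, relative to the base point. -/
noncomputable def idx (x : Fin N) : ℕ := Nat.find (exists_pow_bpt (σ := σ) x)

lemma idx_spec (x : Fin N) : (σ ^ idx (σ := σ) x) (bpt (σ := σ) x) = x :=
  Nat.find_spec (exists_pow_bpt x)

lemma idx_lt (x : Fin N) : idx (σ := σ) x < oSz σ x := by
  obtain ⟨i, hi⟩ := exists_pow_bpt (σ := σ) x
  have h2 : (σ ^ (i % oSz σ (bpt (σ := σ) x))) (bpt (σ := σ) x) = x := by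
    rw [pow_mod_oSz]; exact hi
  have h3 : idx (σ := σ) x ≤ i % oSz σ (bpt (σ := σ) x) := Nat.find_min' _ h2
  calc idx (σ := σ) x ≤ i % oSz σ (bpt (σ := σ) x) := h3
    _ < oSz σ (bpt (σ := σ) x) := Nat.mod_lt _ (oSz_pos _)
    _ = oSz σ x := oSz_bpt x

lemma idx_unique {x : Fin N} {j : ℕ} (hj : j < oSz σ x)
    (h : (σ ^ j) (bpt (σ := σ) x) = x) : j = idx (σ := σ) x := by
  have h1 := pow_apply_eq_iff_mod.1 (h.trans (idx_spec x).symm)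
  rw [oSz_bpt, Nat.mod_eq_of_lt hj, Nat.mod_eq_of_lt (idx_lt x)] at h1
  exact h1

end Orbits
section Construction

variable {N : ℕ} (σ : Equiv.Perm (Fin N)) (m T : ℕ)

/-- Arithmetic injectivity lemma. -/
lemma nt_lemma {L m : ℕ} (hL : 0 < L) {u u' v v' : ℕ}
    (hu : u < Nat.gcd L m) (hu' : u' < Nat.gcd L m)
    (hv : v < L / Nat.gcd L m) (hv' : v' < L / Nat.gcd L m)
    (h : (u + m * v) % L = (u' + m * v') % L) : u = u' ∧ v = v' := by
  set d := Nat.gcd L m with hd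
  have hdL : d ∣ L := Nat.gcd_dvd_left L m
  have hdm : d ∣ m := Nat.gcd_dvd_right L m
  have hmod : Nat.ModEq L (u + m * v) (u' + m * v') := h
  have hmodd : Nat.ModEq d (u + m * v) (u' + m * v') := hmod.of_dvd hdL
  have hdu : u = u' := by
    have hm0 : m ≡ 0 [MOD d] := Nat.modEq_zero_iff_dvd.2 hdm
    have e1 : u + m * v ≡ u + 0 * v [MOD d] := Nat.ModEq.add_left u (hm0.mul_right v)
    have e2 : u' + m * v' ≡ u' + 0 * v' [MOD d] := Nat.ModEq.add_left u' (hm0.mul_right v')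
    simp only [Nat.zero_mul, Nat.add_zero] at e1 e2
    have := (e1.symm.trans hmodd).trans e2
    rwa [Nat.ModEq, Nat.mod_eq_of_lt hu, Nat.mod_eq_of_lt hu'] at this
  subst hdu
  refine ⟨rfl, ?_⟩
  have hmv : Nat.ModEq L (m * v) (m * v') := (Nat.ModEq.add_left_cancel' u hmod)
  have hvv : Nat.ModEq (L / Nat.gcd L m) v v' := Nat.ModEq.cancel_left_div_gcd hL hmv
  rw [Nat.ModEq, Nat.mod_eq_of_lt hv, Nat.mod_eq_of_lt hv'] at hvv
  exact hvv

variable {σ}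

/-- gcd of orbit size with `m`. -/
noncomputable def dd (x : Fin N) : ℕ := Nat.gcd (oSz σ x) m

/-- quotient of orbit size by the gcd. -/
noncomputable def LL (x : Fin N) : ℕ := oSz σ x / dd (σ := σ) m x

lemma dd_pos (x : Fin N) : 0 < dd (σ := σ) m x :=
  Nat.gcd_pos_of_pos_left m (oSz_pos x)

lemma dd_dvd_oSz (x : Fin N) : dd (σ := σ) m x ∣ oSz σ x := Nat.gcd_dvd_left _ _

lemma dd_mul_LL (x : Fin N) : dd (σ := σ) m x * LL (σ := σ) m x = oSz σ x :=
  Nat.mul_div_cancel' (dd_dvd_oSz m x)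

lemma LL_pos (x : Fin N) : 0 < LL (σ := σ) m x :=
  Nat.div_pos (Nat.le_of_dvd (oSz_pos x) (dd_dvd_oSz m x)) (dd_pos m x)

lemma dd_eq_of_sameCycle {x y : Fin N} (h : σ.SameCycle x y) :
    dd (σ := σ) m x = dd (σ := σ) m y := by
  rw [dd, dd, oSz_eq_of_sameCycle h]

lemma LL_eq_of_sameCycle {x y : Fin N} (h : σ.SameCycle x y) :
    LL (σ := σ) m x = LL (σ := σ) m y := by
  rw [LL, LL, oSz_eq_of_sameCycle h, dd_eq_of_sameCycle m h]

lemma dd_le (hm : 0 < m) (x : Fin N) : dd (σ := σ) m x ≤ m :=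
  Nat.le_of_dvd hm (Nat.gcd_dvd_right _ _)

/-- The conjugating map (as a function). -/
noncomputable def FF (x : Fin N) : Fin N :=
  if T < oSz σ x then
    (σ ^ (idx (σ := σ) x / LL (σ := σ) m x + m * (idx (σ := σ) x % LL (σ := σ) m x)))
      (bpt (σ := σ) x)
  else x

lemma FF_mem_orbS (x : Fin N) : FF (σ := σ) m T x ∈ orbS σ x := by
  unfold FF
  split
  · rw [orbS_eq_of_sameCycle (sameCycle_bpt x)]
    exact pow_mem_orbS _ _
  · exact self_mem_orbS x

lemma FF_inj : Function.Injective (FF (σ := σ) m T) := by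
  intro x y h
  have h1 : σ.SameCycle x (FF (σ := σ) m T x) := mem_orbS.1 (FF_mem_orbS m T x)
  have h2 : σ.SameCycle y (FF (σ := σ) m T y) := mem_orbS.1 (FF_mem_orbS m T y)
  rw [← h] at h2
  have hxy : σ.SameCycle x y := h1.trans h2.symm
  have hsz : oSz σ y = oSz σ x := (oSz_eq_of_sameCycle hxy).symm
  unfold FF at h
  by_cases hT : T < oSz σ x
  · rw [if_pos hT, if_pos (hsz ▸ hT)] at h
    have hb : bpt (σ := σ) y = bpt (σ := σ) x := (bpt_eq_of_sameCycle hxy).symm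
    have hLL : LL (σ := σ) m y = LL (σ := σ) m x := (LL_eq_of_sameCycle m hxy).symm
    rw [hb, hLL] at h
    have hmod := pow_apply_eq_iff_mod.1 h
    rw [oSz_bpt] at hmod
    have hL1 : 0 < LL (σ := σ) m x := LL_pos m x
    have hux : idx (σ := σ) x / LL (σ := σ) m x < dd (σ := σ) m x := by
      rw [Nat.div_lt_iff_lt_mul hL1, dd_mul_LL]
      exact idx_lt x
    have huy : idx (σ := σ) y / LL (σ := σ) m x < dd (σ := σ) m x := by
      rw [Nat.div_lt_iff_lt_mul hL1, dd_mul_LL]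
      rw [← hsz]
      exact idx_lt y
    have hnt := nt_lemma (oSz_pos (σ := σ) x)
      (u := idx (σ := σ) x / LL (σ := σ) m x) (v := idx (σ := σ) x % LL (σ := σ) m x)
      (u' := idx (σ := σ) y / LL (σ := σ) m x) (v' := idx (σ := σ) y % LL (σ := σ) m x)
      (hux) (huy)
      (Nat.mod_lt _ hL1) (Nat.mod_lt _ hL1) hmod
    obtain ⟨e1, e2⟩ := hnt
    have hidx : idx (σ := σ) x = idx (σ := σ) y := by
      have d1 := Nat.div_add_mod (idx (σ := σ) x) (LL (σ := σ) m x)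
      have d2 := Nat.div_add_mod (idx (σ := σ) y) (LL (σ := σ) m x)
      rw [← e1, ← e2] at d2
      omega
    rw [← idx_spec x, ← idx_spec y, hb, hidx]
  · rw [if_neg hT, if_neg (hsz ▸ hT)] at h
    exact h

end Construction
section Construction2

variable {N : ℕ} {σ : Equiv.Perm (Fin N)} {m T : ℕ}

/-- The conjugating permutation. -/
noncomputable def gg (σ : Equiv.Perm (Fin N)) (m T : ℕ) : Equiv.Perm (Fin N) :=
  Equiv.ofBijective (FF (σ := σ) m T)
    (Finite.injective_iff_bijective.1 (FF_inj m T))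

lemma gg_apply (x : Fin N) : gg σ m T x = FF (σ := σ) m T x := rfl

lemma FF_good (hm : 0 < m) (hT : 1 ≤ T) {x : Fin N}
    (h1 : ¬(1 < oSz σ x ∧ oSz σ x ≤ T))
    (h2 : ¬(T < oSz σ x ∧ idx (σ := σ) x % LL (σ := σ) m x = LL (σ := σ) m x - 1)) :
    FF (σ := σ) m T (σ x) = (σ ^ m) (FF (σ := σ) m T x) := by
  by_cases hfix : σ x = x
  · have hsz : oSz σ x = 1 := oSz_eq_one_iff.2 hfix
    have hT0 : ¬ T < oSz σ x := by rw [hsz]; omega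
    rw [hfix]
    rw [FF, if_neg hT0]
    exact (Equiv.Perm.pow_apply_eq_self_of_apply_eq_self hfix m).symm
  · have hgt1 : 1 < oSz σ x := by
      rcases Nat.lt_or_ge 1 (oSz σ x) with h | h
      · exact h
      · exact absurd (oSz_eq_one_iff.1 (le_antisymm h (oSz_pos x))) hfix
    have hT' : T < oSz σ x := by
      by_contra hc
      exact h1 ⟨hgt1, Nat.le_of_not_lt hc⟩
    -- long case
    have hsc : σ.SameCycle x (σ x) := ⟨1, by simp⟩
    have hbp : bpt (σ := σ) (σ x) = bpt (σ := σ) x := (bpt_eq_of_sameCycle hsc).symm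
    have hszx : oSz σ (σ x) = oSz σ x := (oSz_eq_of_sameCycle hsc).symm
    have hLLx : LL (σ := σ) m (σ x) = LL (σ := σ) m x := (LL_eq_of_sameCycle m hsc).symm
    set L := oSz σ x with hL
    set L1 := LL (σ := σ) m x with hL1
    set D := dd (σ := σ) m x with hD
    set j := idx (σ := σ) x with hj
    set u := j / L1 with hu
    set v := j % L1 with hv
    have hL1pos : 0 < L1 := LL_pos m x
    have hjlt : j < L := idx_lt x
    have hDL : D * L1 = L := dd_mul_LL m x
    have hvlt : v < L1 := Nat.mod_lt _ hL1pos
    have hvne : v ≠ L1 - 1 := fun hc => h2 ⟨hT', hc⟩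
    have hv1 : v + 1 < L1 := by omega
    have hult : u < D := by
      rw [hu, Nat.div_lt_iff_lt_mul hL1pos, hDL]
      exact hjlt
    have hdam : L1 * u + v = j := Nat.div_add_mod j L1
    have hj1lt : j + 1 < L := by
      have hmul1 : L1 * (u + 1) = L1 * u + L1 := by ring
      have hmul2 : L1 * (u + 1) ≤ L1 * D := Nat.mul_le_mul_left _ hult
      have hLD : L1 * D = L := by rw [mul_comm]; exact hDL
      omega
    have hspec : (σ ^ j) (bpt (σ := σ) x) = x := by rw [hj]; exact idx_spec x
    have hidx1 : j + 1 = idx (σ := σ) (σ x) := by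
      apply idx_unique (by rw [hszx]; exact hj1lt)
      rw [hbp, pow_succ', Equiv.Perm.mul_apply]
      exact congrArg σ hspec
    -- compute FF (σ x)
    have hdiv : (j + 1) / L1 = u := by
      have : j + 1 = L1 * u + (v + 1) := by omega
      rw [this, Nat.mul_add_div hL1pos, Nat.div_eq_of_lt hv1, add_zero]
    have hmod : (j + 1) % L1 = v + 1 := by
      have : j + 1 = L1 * u + (v + 1) := by omega
      rw [this, Nat.mul_add_mod, Nat.mod_eq_of_lt hv1]
    have lhs : FF (σ := σ) m T (σ x) = (σ ^ (u + m * (v + 1))) (bpt (σ := σ) x) := by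
      rw [FF, if_pos (by rw [hszx]; exact hT'), hbp, hLLx, ← hidx1, hdiv, hmod]
    have hFFx : FF (σ := σ) m T x = (σ ^ (u + m * v)) (bpt (σ := σ) x) := by
      rw [FF, if_pos hT']
    have rhs : (σ ^ m) (FF (σ := σ) m T x) = (σ ^ (m + (u + m * v))) (bpt (σ := σ) x) := by
      rw [hFFx, ← Equiv.Perm.mul_apply, ← pow_add]
    rw [lhs, rhs]
    congr 1
    ring

end Construction2
section Counting

variable {N : ℕ}

lemma card_base_mul (σ : Equiv.Perm (Fin N)) (T : ℕ) :
    (Finset.univ.filter fun a : Fin N => bpt (σ := σ) a = a ∧ T < oSz σ a).card * T ≤ N := by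
  classical
  set B := Finset.univ.filter fun a : Fin N => bpt (σ := σ) a = a ∧ T < oSz σ a with hB
  have hdisj : ∀ a ∈ B, ∀ b ∈ B, a ≠ b → Disjoint (orbS σ a) (orbS σ b) := by
    intro a ha b hb hab
    rw [Finset.disjoint_left]
    intro z hza hzb
    have h1 : σ.SameCycle a z := mem_orbS.1 hza
    have h2 : σ.SameCycle b z := mem_orbS.1 hzb
    have h3 : σ.SameCycle a b := h1.trans h2.symm
    have h4 : bpt (σ := σ) a = bpt (σ := σ) b := bpt_eq_of_sameCycle h3
    rw [(Finset.mem_filter.1 ha).2.1, (Finset.mem_filter.1 hb).2.1] at h4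
    exact hab h4
  calc B.card * T = ∑ _a ∈ B, T := by rw [Finset.sum_const, smul_eq_mul]
    _ ≤ ∑ a ∈ B, oSz σ a := Finset.sum_le_sum fun a ha =>
        le_of_lt (Finset.mem_filter.1 ha).2.2
    _ = (B.biUnion fun a => orbS σ a).card := (Finset.card_biUnion hdisj).symm
    _ ≤ (Finset.univ : Finset (Fin N)).card := Finset.card_le_univ _
    _ = N := by simp

lemma card_bad_le (σ : Equiv.Perm (Fin N)) {m : ℕ} (hm : 0 < m) (T : ℕ) :
    (Finset.univ.filter fun y : Fin N =>
        T < oSz σ y ∧ idx (σ := σ) y % LL (σ := σ) m y = LL (σ := σ) m y - 1).card ≤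
      (Finset.univ.filter fun a : Fin N => bpt (σ := σ) a = a ∧ T < oSz σ a).card * m := by
  classical
  set B := Finset.univ.filter fun a : Fin N => bpt (σ := σ) a = a ∧ T < oSz σ a with hB
  have h := Finset.card_le_card_of_injOn
    (s := Finset.univ.filter fun y : Fin N =>
        T < oSz σ y ∧ idx (σ := σ) y % LL (σ := σ) m y = LL (σ := σ) m y - 1)
    (f := fun y : Fin N => (bpt (σ := σ) y, idx (σ := σ) y / LL (σ := σ) m y))
    (t := B ×ˢ Finset.range m) ?_ ?_
  · calc _ ≤ (B ×ˢ Finset.range m).card := h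
      _ = B.card * m := by rw [Finset.card_product, Finset.card_range]
  · intro y hy
    obtain ⟨-, hTy, hvy⟩ := Finset.mem_filter.1 hy
    refine Finset.mem_product.2 ⟨Finset.mem_filter.2 ⟨Finset.mem_univ _, ?_, ?_⟩, ?_⟩
    · exact (bpt_eq_of_sameCycle (sameCycle_bpt y)).symm
    · rw [oSz_bpt]; exact hTy
    · refine Finset.mem_range.2 (lt_of_lt_of_le ?_ (dd_le (σ := σ) m hm y))
      rw [Nat.div_lt_iff_lt_mul (LL_pos m y), dd_mul_LL]
      exact idx_lt y
  · intro y hy y' hy' hf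
    simp only [Prod.mk.injEq] at hf
    obtain ⟨hb, hu⟩ := hf
    have hsc : σ.SameCycle y y' := (sameCycle_bpt y).trans (hb ▸ (sameCycle_bpt y').symm)
    have hLL : LL (σ := σ) m y' = LL (σ := σ) m y := (LL_eq_of_sameCycle m hsc).symm
    have hvy := (Finset.mem_coe.1 hy |> Finset.mem_filter.1).2.2
    have hvy' := (Finset.mem_coe.1 hy' |> Finset.mem_filter.1).2.2
    have hidx : idx (σ := σ) y = idx (σ := σ) y' := by
      have d1 := Nat.div_add_mod (idx (σ := σ) y) (LL (σ := σ) m y)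
      have d2 := Nat.div_add_mod (idx (σ := σ) y') (LL (σ := σ) m y')
      rw [hLL] at d2 hvy' hu
      rw [← hu] at d2
      omega
    rw [← idx_spec y, ← idx_spec y', hidx, hb]

end Counting
section ConjClose

variable {N : ℕ}

lemma cycN_eq_oSz (σ : Equiv.Perm (Fin N)) (i : ℕ) :
    cycN σ i = (Finset.univ.filter fun x => oSz σ x = i).card := rfl

lemma short_card_eq (σ : Equiv.Perm (Fin N)) (T : ℕ) :
    (Finset.univ.filter fun x => 1 < oSz σ x ∧ oSz σ x ≤ T).card =
      ∑ i ∈ Finset.Icc 2 T, cycN σ i := by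
  classical
  have hset : (Finset.univ.filter fun x => 1 < oSz σ x ∧ oSz σ x ≤ T) =
      (Finset.Icc 2 T).biUnion fun i => Finset.univ.filter fun x => oSz σ x = i := by
    ext x
    simp only [Finset.mem_filter, Finset.mem_univ, true_and, Finset.mem_biUnion,
      Finset.mem_Icc]
    constructor
    · rintro ⟨h1, h2⟩
      exact ⟨oSz σ x, ⟨h1, h2⟩, rfl⟩
    · rintro ⟨i, ⟨h1, h2⟩, rfl⟩
      exact ⟨h1, h2⟩
  rw [hset, Finset.card_biUnion]
  · exact Finset.sum_congr rfl fun i _ => (cycN_eq_oSz σ i).symm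
  · intro i _ j _ hij
    rw [Function.onFun, Finset.disjoint_left]
    intro x hx hx'
    rw [Finset.mem_filter] at hx hx'
    exact hij (hx.2 ▸ hx'.2 ▸ rfl)

lemma exists_conj_close (σ : Equiv.Perm (Fin N)) {m T : ℕ} (hm : 1 ≤ m) (hT : 1 ≤ T) :
    ∃ τ : Equiv.Perm (Fin N), IsConj σ τ ∧ dHam τ (σ ^ m) ≤
      ((∑ i ∈ Finset.Icc 2 T, cycN σ i : ℕ) : ℝ) / N + (m : ℝ) / T := by
  classical
  set g := gg σ m T with hg
  refine ⟨g * σ * g⁻¹, isConj_iff.2 ⟨g, rfl⟩, ?_⟩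
  -- card transfer
  have hcard : (Finset.univ.filter fun a => (g * σ * g⁻¹) a ≠ (σ ^ m) a).card =
      (Finset.univ.filter fun y => g (σ y) ≠ (σ ^ m) (g y)).card := by
    apply Finset.card_bij' (fun a _ => g⁻¹ a) (fun y _ => g y)
    · intro a ha
      simp only [Finset.mem_filter, Finset.mem_univ, true_and] at ha ⊢
      simp only [Finset.mem_filter, Finset.mem_univ, true_and,
        Equiv.Perm.mul_apply] at ha ⊢
      simpa using ha
    · intro y hy
      simp only [Finset.mem_filter, Finset.mem_univ, true_and] at hy ⊢
      simp only [Finset.mem_filter, Finset.mem_univ, true_and,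
        Equiv.Perm.mul_apply] at hy ⊢
      simpa using hy
    · intro a _; simp
    · intro y _; simp
  have hsub : (Finset.univ.filter fun y => g (σ y) ≠ (σ ^ m) (g y)) ⊆
      (Finset.univ.filter fun x => 1 < oSz σ x ∧ oSz σ x ≤ T) ∪
        (Finset.univ.filter fun y =>
          T < oSz σ y ∧ idx (σ := σ) y % LL (σ := σ) m y = LL (σ := σ) m y - 1) := by
    intro y hy
    simp only [Finset.mem_filter, Finset.mem_univ, true_and, Finset.mem_union] at hy ⊢
    by_contra hc
    rw [not_or] at hc
    exact hy (FF_good hm hT hc.1 hc.2)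
  -- numeric bound
  have hBadLe := card_bad_le σ hm T
  have hBaseLe := card_base_mul σ T
  set S := (Finset.univ.filter fun x => 1 < oSz σ x ∧ oSz σ x ≤ T).card with hS
  set Bad := (Finset.univ.filter fun y =>
      T < oSz σ y ∧ idx (σ := σ) y % LL (σ := σ) m y = LL (σ := σ) m y - 1).card with hBad
  set Base := (Finset.univ.filter fun a : Fin N =>
      bpt (σ := σ) a = a ∧ T < oSz σ a).card with hBase
  have hcount : (Finset.univ.filter fun a => (g * σ * g⁻¹) a ≠ (σ ^ m) a).card ≤ S + Bad := by
    rw [hcard]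
    exact le_trans (Finset.card_le_card hsub) (Finset.card_union_le _ _)
  rw [dHam]
  rw [← short_card_eq σ T]
  by_cases hN : N = 0
  · subst hN
    have : (Finset.univ.filter fun a => (g * σ * g⁻¹) a ≠ (σ ^ m) a).card = 0 := by
      simp [Finset.card_eq_zero, Finset.filter_eq_empty_iff]
    rw [this]
    simp only [Nat.cast_zero, zero_div, Nat.cast_zero]
    positivity
  · have hN0 : (0:ℝ) < N := Nat.cast_pos.2 (Nat.pos_of_ne_zero hN)
    have hT0 : (0:ℝ) < T := Nat.cast_pos.2 hT
    have hm0 : (0:ℝ) ≤ m := Nat.cast_nonneg m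
    have hc1 : ((Finset.univ.filter fun a => (g * σ * g⁻¹) a ≠ (σ ^ m) a).card : ℝ) ≤
        (S : ℝ) + (Bad : ℝ) := by exact_mod_cast hcount
    have hc2 : (Bad : ℝ) ≤ (Base : ℝ) * m := by exact_mod_cast hBadLe
    have hc3 : (Base : ℝ) * T ≤ N := by exact_mod_cast hBaseLe
    have hc4 : (Base : ℝ) * m / N ≤ (m : ℝ) / T := by
      rw [div_le_div_iff₀ hN0 hT0]
      nlinarith
    calc ((Finset.univ.filter fun a => (g * σ * g⁻¹) a ≠ (σ ^ m) a).card : ℝ) / N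
        ≤ ((S : ℝ) + (Bad : ℝ)) / N := by
          gcongr
      _ = (S : ℝ) / N + (Bad : ℝ) / N := add_div _ _ _
      _ ≤ (S : ℝ) / N + (Base : ℝ) * m / N := by
          gcongr
      _ ≤ (S : ℝ) / N + (m : ℝ) / T := by linarith

end ConjClose
section BestConj

variable {N : ℕ}

lemma bestConj_exists (σ : Equiv.Perm (Fin N)) (m : ℕ) :
    ∃ τ ∈ Finset.univ.filter fun τ => IsConj σ τ,
      ∀ τ' ∈ Finset.univ.filter fun τ => IsConj σ τ, dHam τ (σ ^ m) ≤ dHam τ' (σ ^ m) :=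
  Finset.exists_min_image _ _ ⟨σ, Finset.mem_filter.2 ⟨Finset.mem_univ _, IsConj.refl σ⟩⟩

/-- A conjugate of `σ` closest to `σ ^ m` in the Hamming metric. -/
noncomputable def bestConj (σ : Equiv.Perm (Fin N)) (m : ℕ) : Equiv.Perm (Fin N) :=
  Classical.choose (bestConj_exists σ m)

lemma bestConj_isConj (σ : Equiv.Perm (Fin N)) (m : ℕ) : IsConj σ (bestConj σ m) :=
  (Finset.mem_filter.1 (Classical.choose_spec (bestConj_exists σ m)).1).2

lemma bestConj_min (σ : Equiv.Perm (Fin N)) (m : ℕ) {τ : Equiv.Perm (Fin N)}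
    (h : IsConj σ τ) : dHam (bestConj σ m) (σ ^ m) ≤ dHam τ (σ ^ m) :=
  (Classical.choose_spec (bestConj_exists σ m)).2 τ
    (Finset.mem_filter.2 ⟨Finset.mem_univ _, h⟩)

end BestConj

section DHamExtra

variable {M : ℕ}

lemma dHam_comm (p q : Equiv.Perm (Fin M)) : dHam p q = dHam q p := by
  unfold dHam
  have h : (Finset.univ.filter fun a => p a ≠ q a) = Finset.univ.filter fun a => q a ≠ p a :=
    Finset.filter_congr fun a _ => by simp [ne_comm]
  rw [h]

lemma dHam_inv_mul (p q : Equiv.Perm (Fin M)) : dHam (p⁻¹ * q) 1 = dHam q p := by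
  unfold dHam
  have h : (Finset.univ.filter fun a => (p⁻¹ * q) a ≠ (1 : Equiv.Perm (Fin M)) a) =
      Finset.univ.filter fun a => q a ≠ p a :=
    Finset.filter_congr fun a _ => by
      simp only [Equiv.Perm.mul_apply, Equiv.Perm.one_apply, ne_eq]
      rw [Equiv.Perm.inv_eq_iff_eq]
  rw [h]

lemma dHam_one_eq (z : Equiv.Perm (Fin M)) :
    dHam z 1 = ((Finset.univ.filter fun x => z x ≠ x).card : ℝ) / M := by
  unfold dHam
  have h : (Finset.univ.filter fun a => z a ≠ (1 : Equiv.Perm (Fin M)) a) =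
      Finset.univ.filter fun x => z x ≠ x :=
    Finset.filter_congr fun a _ => by simp
  rw [h]

lemma fix_conj_card (g r : Equiv.Perm (Fin M)) :
    (Finset.univ.filter fun x => (g * r * g⁻¹) x = x).card =
      (Finset.univ.filter fun x => r x = x).card := by
  apply Finset.card_bij' (fun a _ => g⁻¹ a) (fun y _ => g y)
  · intro a ha
    simp only [Finset.mem_filter, Finset.mem_univ, true_and] at ha ⊢
    simp only [Finset.mem_filter, Finset.mem_univ, true_and, Equiv.Perm.mul_apply] at ha ⊢
    have := congrArg (fun w => g⁻¹ w) ha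
    simpa using this
  · intro y hy
    simp only [Finset.mem_filter, Finset.mem_univ, true_and] at hy ⊢
    simp only [Finset.mem_filter, Finset.mem_univ, true_and, Equiv.Perm.mul_apply] at hy ⊢
    simp [hy]
  · intro a _; simp
  · intro y _; simp

lemma fix_mul_le (r z : Equiv.Perm (Fin M)) :
    (Finset.univ.filter fun x => (r * z) x = x).card ≤
      (Finset.univ.filter fun x => r x = x).card +
        (Finset.univ.filter fun x => z x ≠ x).card := by
  refine le_trans (Finset.card_le_card ?_) (Finset.card_union_le _ _)
  intro x hx
  simp only [Finset.mem_filter, Finset.mem_univ, true_and, Finset.mem_union] at hx ⊢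
  simp only [Finset.mem_filter, Finset.mem_univ, true_and, Finset.mem_union,
    Equiv.Perm.mul_apply, ne_eq] at hx ⊢
  by_cases hz : z x = x
  · left; rw [hz] at hx; exact hx
  · right; exact hz

lemma fix_le_mul (r z : Equiv.Perm (Fin M)) :
    (Finset.univ.filter fun x => r x = x).card ≤
      (Finset.univ.filter fun x => (r * z) x = x).card +
        (Finset.univ.filter fun x => z x ≠ x).card := by
  refine le_trans (Finset.card_le_card ?_) (Finset.card_union_le _ _)
  intro x hx
  simp only [Finset.mem_filter, Finset.mem_univ, true_and, Finset.mem_union] at hx ⊢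
  simp only [Finset.mem_filter, Finset.mem_univ, true_and, Finset.mem_union,
    Equiv.Perm.mul_apply, ne_eq] at hx ⊢
  by_cases hz : z x = x
  · left; rw [hz]; exact hx
  · right; exact hz

lemma cycN_one_eq_fix (σ : Equiv.Perm (Fin M)) :
    cycN σ 1 = (Finset.univ.filter fun x => σ x = x).card := by
  rw [cycN_eq_oSz]
  congr 1
  apply Finset.filter_congr
  intro x _
  simp [oSz_eq_one_iff]

lemma fix_add_cyc_le (σ : Equiv.Perm (Fin M)) {i : ℕ} (hi : 2 ≤ i) :
    cycN σ 1 + cycN σ i ≤ (Finset.univ.filter fun x => (σ ^ i) x = x).card := by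
  rw [cycN_eq_oSz, cycN_eq_oSz]
  rw [← Finset.card_union_of_disjoint]
  · apply Finset.card_le_card
    intro x hx
    simp only [Finset.mem_union, Finset.mem_filter, Finset.mem_univ, true_and] at hx ⊢
    rcases hx with h | h
    · exact Equiv.Perm.pow_apply_eq_self_of_apply_eq_self (oSz_eq_one_iff.1 h) i
    · have := pow_mod_oSz (σ := σ) x i
      rw [h, Nat.mod_self, pow_zero] at this
      exact this.symm
  · rw [Finset.disjoint_left]
    intro x hx hx'
    rw [Finset.mem_filter] at hx hx'
    omega

end DHamExtra

section Ultra

variable {ω : Ultrafilter ℕ}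

lemma exists_ultralim {f : ℕ → ℝ} (hf : ∀ k, f k ∈ Set.Icc (0:ℝ) 1) :
    ∃ a, Tendsto f (ω : Filter ℕ) (𝓝 a) := by
  have hle : (Ultrafilter.map f ω : Filter ℝ) ≤ Filter.principal (Set.Icc (0:ℝ) 1) := by
    rw [Ultrafilter.coe_map, Filter.le_principal_iff, Filter.mem_map]
    exact Filter.univ_mem' hf
  obtain ⟨a, -, ha⟩ := (isCompact_Icc (a := (0:ℝ)) (b := 1)).ultrafilter_le_nhds
    (Ultrafilter.map f ω) hle
  rw [Ultrafilter.coe_map] at ha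
  exact ⟨a, ha⟩

end Ultra

theorem cyc_one_infty_iff_pow_conj (hω : (ω : Filter ℕ) ≤ Filter.cofinite)
    (hpos : ∀ k, 0 < n k) (hn : Tendsto n atTop atTop)
    (p : ∀ k, Equiv.Perm (Fin (n k))) :
    (∀ i : ℕ, 2 ≤ i → cycSeq (ω := ω) p i = 0) ↔
      ∀ m : ℕ, 1 ≤ m → IsConj (usMk ω n p) ((usMk ω n p) ^ m) := by
  classical
  have hfrac : ∀ (q : ∀ k, Equiv.Perm (Fin (n k))) (i : ℕ) (k : ℕ),
      ((cycN (q k) i : ℝ) / n k) ∈ Set.Icc (0:ℝ) 1 := by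
    intro q i k
    constructor
    · positivity
    · rw [div_le_one (by exact_mod_cast hpos k)]
      have : cycN (q k) i ≤ n k := by
        refine le_trans (Finset.card_filter_le _ _) ?_
        simp
      exact_mod_cast this
  constructor
  · -- forward direction
    intro h m hm
    have hTend : ∀ i, 2 ≤ i →
        Tendsto (fun k => (cycN (p k) i : ℝ) / n k) (ω : Filter ℕ) (𝓝 0) := by
      intro i hi
      obtain ⟨a, ha⟩ := exists_ultralim (ω := ω) (hfrac p i)
      have h2 : cycSeq (ω := ω) p i = a := ha.limUnder_eq
      rw [h i hi] at h2
      rwa [← h2] at ha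
    set q : ∀ k, Equiv.Perm (Fin (n k)) := fun k => bestConj (p k) m with hq
    have hex : ∀ k, ∃ c : Equiv.Perm (Fin (n k)), c * p k * c⁻¹ = q k := fun k =>
      isConj_iff.1 (bestConj_isConj (p k) m)
    choose g hg using hex
    have hgpq : g * p * g⁻¹ = q := by
      funext k
      simpa using hg k
    have hmain : Tendsto (fun k => dHam (q k) ((p k) ^ m)) (ω : Filter ℕ) (𝓝 0) := by
      rw [Metric.tendsto_nhds]
      intro ε hε
      obtain ⟨T', hT'⟩ := exists_nat_gt (2 * m / ε)
      set T := T' + 1 with hTdef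
      have hT1 : 1 ≤ T := Nat.le_add_left 1 T'
      have hT0 : (0:ℝ) < T := by positivity
      have hTb : (m:ℝ) / T < ε / 2 := by
        rw [div_lt_iff₀ hT0]
        have h1 : 2 * (m:ℝ) / ε < T := lt_of_lt_of_le hT' (by rw [hTdef]; push_cast; linarith)
        rw [div_lt_iff₀ hε] at h1
        nlinarith
      have hSf : Tendsto (fun k => ((∑ i ∈ Finset.Icc 2 T, cycN (p k) i : ℕ) : ℝ) / n k)
          (ω : Filter ℕ) (𝓝 0) := by
        have heq : ∀ k, ((∑ i ∈ Finset.Icc 2 T, cycN (p k) i : ℕ) : ℝ) / n k =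
            ∑ i ∈ Finset.Icc 2 T, (cycN (p k) i : ℝ) / n k := by
          intro k
          rw [← Finset.sum_div]
          push_cast
          ring
        simp only [heq]
        have := tendsto_finset_sum (Finset.Icc 2 T)
          (f := fun i (k : ℕ) => (cycN (p k) i : ℝ) / n k)
          (a := fun _ => (0:ℝ))
          (fun i hi => hTend i (Finset.mem_Icc.1 hi).1)
        simpa using this
      have hev : ∀ᶠ k in (ω : Filter ℕ),
          ((∑ i ∈ Finset.Icc 2 T, cycN (p k) i : ℕ) : ℝ) / n k < ε / 2 :=
        hSf.eventually_lt_const (by positivity)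
      filter_upwards [hev] with k hk
      obtain ⟨τ, hτc, hτb⟩ := exists_conj_close (p k) hm hT1
      have hmin := bestConj_min (p k) m hτc
      have hnn : 0 ≤ dHam (q k) ((p k) ^ m) := dHam_nonneg _ _
      rw [Real.dist_eq, sub_zero, abs_of_nonneg hnn]
      calc dHam (q k) ((p k) ^ m) ≤ dHam τ ((p k) ^ m) := hmin
        _ ≤ ((∑ i ∈ Finset.Icc 2 T, cycN (p k) i : ℕ) : ℝ) / n k + (m:ℝ) / T := hτb
        _ < ε / 2 + ε / 2 := by
            apply add_lt_add hk hTb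
        _ = ε := by ring
    -- usMk q = usMk (p ^ m)
    have hqq : usMk ω n q = usMk ω n (p ^ m) := by
      apply (QuotientGroup.mk'_eq_mk' (N := soficNull ω n)).2
      refine ⟨q⁻¹ * p ^ m, ?_, by group⟩
      show Tendsto (fun k => dHam ((q⁻¹ * p ^ m) k) 1) (ω : Filter ℕ) (𝓝 0)
      have heq : ∀ k, dHam ((q⁻¹ * p ^ m) k) 1 = dHam (q k) ((p k) ^ m) := by
        intro k
        have h1 : (q⁻¹ * p ^ m) k = (q k)⁻¹ * (p k) ^ m := by simp
        rw [h1, dHam_inv_mul, dHam_comm]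
      simp only [heq]
      exact hmain
    have hstep : usMk ω n g * usMk ω n p * (usMk ω n g)⁻¹ = usMk ω n q := by
      rw [← map_inv, ← map_mul, ← map_mul, hgpq]
    rw [← map_pow, ← hqq]
    exact isConj_iff.2 ⟨usMk ω n g, hstep⟩
  · -- backward direction
    intro h i hi
    have him : 1 ≤ i := by omega
    obtain ⟨c, hc⟩ := isConj_iff.1 (h i him)
    obtain ⟨g, hgc⟩ := QuotientGroup.mk'_surjective (soficNull ω n) c
    have hgc' : usMk ω n g = c := hgc
    have hmk : usMk ω n (g * p * g⁻¹) = usMk ω n (p ^ i) := by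
      rw [map_mul, map_mul, map_inv, hgc', map_pow]
      exact hc
    obtain ⟨z, hzmem, hzeq⟩ := (QuotientGroup.mk'_eq_mk' (N := soficNull ω n)).1 hmk
    have hzt : Tendsto (fun k => dHam (z k) 1) (ω : Filter ℕ) (𝓝 0) := hzmem
    obtain ⟨c1, hc1⟩ := exists_ultralim (ω := ω) (hfrac p 1)
    obtain ⟨ci, hci⟩ := exists_ultralim (ω := ω) (hfrac p i)
    set F : ℕ → ℝ := fun k =>
      ((Finset.univ.filter fun x => ((p k) ^ i) x = x).card : ℝ) / n k with hF
    have hdiff : ∀ k, |F k - (cycN (p k) 1 : ℝ) / n k| ≤ dHam (z k) 1 := by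
      intro k
      have e1 : (p k) ^ i = (g k * p k * (g k)⁻¹) * (z k) := by
        have := congrFun hzeq k
        simp only [Pi.mul_apply, Pi.inv_apply, Pi.pow_apply] at this
        exact this.symm
      set r := g k * p k * (g k)⁻¹ with hr
      have hfr : (Finset.univ.filter fun x => r x = x).card = cycN (p k) 1 := by
        rw [cycN_one_eq_fix, hr, fix_conj_card]
      have hA := fix_mul_le r (z k)
      have hB := fix_le_mul r (z k)
      rw [← e1] at hA hB
      rw [hfr] at hA hB
      have hnk : (0:ℝ) < n k := by exact_mod_cast hpos k
      have hcast : ∀ a b : ℕ, a ≤ b → (a:ℝ) / n k ≤ (b:ℝ) / n k := by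
        intro a b hab
        gcongr
      have hA' := hcast _ _ hA
      have hB' := hcast _ _ hB
      have hdz : dHam (z k) 1 =
          ((Finset.univ.filter fun x => (z k) x ≠ x).card : ℝ) / n k := dHam_one_eq (z k)
      have hFk : F k =
          ((Finset.univ.filter fun x => ((p k) ^ i) x = x).card : ℝ) / n k := by rw [hF]
      rw [Nat.cast_add, add_div] at hA' hB'
      rw [abs_sub_le_iff]
      constructor
      · linarith
      · linarith
    have hFt : Tendsto (fun k => F k - (cycN (p k) 1 : ℝ) / n k) (ω : Filter ℕ) (𝓝 0) :=
      squeeze_zero_norm hdiff hzt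
    have hF2 : Tendsto F (ω : Filter ℕ) (𝓝 c1) := by
      have h2 := hFt.add hc1
      have heq : (fun k => (F k - (cycN (p k) 1 : ℝ) / n k) + (cycN (p k) 1 : ℝ) / n k) = F := by
        funext k
        ring
      rw [heq, zero_add] at h2
      exact h2
    have hpt : ∀ k, (cycN (p k) 1 : ℝ) / n k + (cycN (p k) i : ℝ) / n k ≤ F k := by
      intro k
      rw [← add_div]
      simp only [hF]
      have h3 := fix_add_cyc_le (p k) hi
      have h4 : ((cycN (p k) 1 + cycN (p k) i : ℕ) : ℝ) ≤
          ((Finset.univ.filter fun x => ((p k) ^ i) x = x).card : ℝ) := by exact_mod_cast h3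
      push_cast at h4 ⊢
      gcongr
    have hle : c1 + ci ≤ c1 := le_of_tendsto_of_tendsto' (hc1.add hci) hF2 hpt
    have hge : 0 ≤ ci := ge_of_tendsto' hci fun k => by positivity
    have hci0 : ci = 0 := le_antisymm (by linarith) hge
    have hfin : cycSeq (ω := ω) p i = ci := hci.limUnder_eq
    rw [hfin, hci0]
end
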